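/- arXiv:2005.08253 — 3 statements merged into one kernel-verified Lean document; each statement's English description precedes it below -/
import Mathlib

section
/- Let K be an algebraically closed field of characteristic 0 and let n ≥ 2 and c ≥ 2 be integers. Then there exists a K-linear subspace H of the space of (n+1)×c matrices over K with dim_K H = (n−1)(c−2) such that every nonzero element of H has rank at least 3. (This is the sharpness of the bound dim H ≤ (n+1)c − 2c − 2n + 2 in Drézet's construction for p = 1, realized by the explicit matrices of Example 12; equivalently, it gives the existence of 1-type uniform Steiner bundles on Pⁿ of minimal rank c + 2(n−1) with c₁ = −c.) -/
open Matrix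
section DrezetAux
variable {K : Type*} [Field K]

noncomputable def dzExt (n c : ℕ) (f : Matrix (Fin (n - 1)) (Fin (c - 2)) K) (i j : ℤ) : K :=
  if h : 0 ≤ i ∧ i < (n : ℤ) - 1 ∧ 0 ≤ j ∧ j < (c : ℤ) - 2 then
    f ⟨i.toNat, by omega⟩ ⟨j.toNat, by omega⟩ else 0

noncomputable def dzG (n c : ℕ) (f : Matrix (Fin (n - 1)) (Fin (c - 2)) K) (i j : ℤ) : K :=
  2 * dzExt n c f i j - 3 * dzExt n c f (i - 1) (j - 1) + dzExt n c f (i - 2) (j - 2)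

noncomputable def dzMat (n c : ℕ) (f : Matrix (Fin (n - 1)) (Fin (c - 2)) K) :
    Matrix (Fin (n + 1)) (Fin c) K :=
  Matrix.of fun i j => dzG n c f ((i : ℕ) : ℤ) ((j : ℕ) : ℤ)

lemma dzExt_eq_zero {n c : ℕ} {f : Matrix (Fin (n - 1)) (Fin (c - 2)) K} {i j : ℤ}
    (h : ¬(0 ≤ i ∧ i < (n : ℤ) - 1 ∧ 0 ≤ j ∧ j < (c : ℤ) - 2)) : dzExt n c f i j = 0 := by
  unfold dzExt; rw [dif_neg h]

lemma dzExt_ne_zero_bounds {n c : ℕ} {f : Matrix (Fin (n - 1)) (Fin (c - 2)) K} {i j : ℤ}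
    (h : dzExt n c f i j ≠ 0) : 0 ≤ i ∧ i < (n : ℤ) - 1 ∧ 0 ≤ j ∧ j < (c : ℤ) - 2 := by
  by_contra hc; exact h (dzExt_eq_zero hc)

theorem dzMat_rank (n c : ℕ) [CharZero K]
    (f : Matrix (Fin (n - 1)) (Fin (c - 2)) K) (hf : f ≠ 0) : 3 ≤ (dzMat n c f).rank := by
  classical
  -- a nonzero entry of f
  have hex : ∃ p : Fin (n - 1) × Fin (c - 2), f p.1 p.2 ≠ 0 := by
    by_contra h; push_neg at h
    exact hf (by ext i j; exact h ⟨i, j⟩)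
  -- the set of diagonals of nonzero entries
  set T : Finset ℤ :=
    (Finset.univ.filter fun p : Fin (n - 1) × Fin (c - 2) => f p.1 p.2 ≠ 0).image
      fun p => ((p.2 : ℕ) : ℤ) - ((p.1 : ℕ) : ℤ) with hT
  have hTne : T.Nonempty := by
    obtain ⟨p, hp⟩ := hex
    exact ⟨_, Finset.mem_image_of_mem _ (Finset.mem_filter.mpr ⟨Finset.mem_univ p, hp⟩)⟩
  set d0 : ℤ := T.min' hTne with hd0
  -- every nonzero extended entry is on a diagonal ≥ d0
  have hlow : ∀ i j : ℤ, dzExt n c f i j ≠ 0 → d0 ≤ j - i := by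
    intro i j h
    obtain ⟨h1, h2, h3, h4⟩ := dzExt_ne_zero_bounds h
    have hm : (j - i) ∈ T := by
      rw [hT]
      refine Finset.mem_image.mpr ⟨(⟨i.toNat, by omega⟩, ⟨j.toNat, by omega⟩), ?_, by push_cast; omega⟩
      refine Finset.mem_filter.mpr ⟨Finset.mem_univ _, ?_⟩
      unfold dzExt at h
      rwa [dif_pos ⟨h1, h2, h3, h4⟩] at h
    exact Finset.min'_le _ _ hm
  -- the diagonal sequence
  set φ : ℤ → K := fun i => dzExt n c f i (i + d0) with hφ
  have hsupp : ∀ i, φ i ≠ 0 → 0 ≤ i ∧ i < (n : ℤ) - 1 ∧ 0 ≤ i + d0 ∧ i + d0 < (c : ℤ) - 2 :=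
    fun i h => dzExt_ne_zero_bounds h
  -- φ is nonzero somewhere
  obtain ⟨pd, hpdm, hpdv⟩ := Finset.mem_image.mp (T.min'_mem hTne)
  have hpd : f pd.1 pd.2 ≠ 0 := (Finset.mem_filter.mp hpdm).2
  have hφw : φ ((pd.1 : ℕ) : ℤ) ≠ 0 := by
    have hcol : ((pd.1 : ℕ) : ℤ) + d0 = ((pd.2 : ℕ) : ℤ) := by rw [hd0, ← hpdv]; ring
    rw [hφ]
    simp only [hcol]
    unfold dzExt
    have hb : (0:ℤ) ≤ ((pd.1 : ℕ) : ℤ) ∧ ((pd.1 : ℕ) : ℤ) < (n : ℤ) - 1 ∧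
        (0:ℤ) ≤ ((pd.2 : ℕ) : ℤ) ∧ ((pd.2 : ℕ) : ℤ) < (c : ℤ) - 2 := by
      have h1 := pd.1.isLt; have h2 := pd.2.isLt; omega
    rw [dif_pos hb]
    convert hpd using 2 <;> exact Fin.ext (by simp)
  -- min and max of the support of φ
  set S : Finset ℤ := (Finset.Icc (0 : ℤ) n).filter fun i => φ i ≠ 0 with hS
  have hmem : ∀ i, φ i ≠ 0 → i ∈ S := by
    intro i h
    have := hsupp i h
    exact Finset.mem_filter.mpr ⟨Finset.mem_Icc.mpr (by omega), h⟩
  have hSne : S.Nonempty := ⟨_, hmem _ hφw⟩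
  set a : ℤ := S.min' hSne with ha
  set b : ℤ := S.max' hSne with hb
  have hφa : φ a ≠ 0 := (Finset.mem_filter.mp (S.min'_mem hSne)).2
  have hφb : φ b ≠ 0 := (Finset.mem_filter.mp (S.max'_mem hSne)).2
  have hab : a ≤ b := S.min'_le _ (S.max'_mem hSne)
  have ha0 : ∀ i, i < a → φ i = 0 := by
    intro i hi; by_contra h
    exact absurd (S.min'_le _ (hmem _ h)) (by omega)
  have hb0 : ∀ i, b < i → φ i = 0 := by
    intro i hi; by_contra h
    exact absurd (S.le_max' _ (hmem _ h)) (by omega)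
  -- the matrix entries on diagonal d0
  set ψ : ℤ → K := fun i => 2 * φ i - 3 * φ (i - 1) + φ (i - 2) with hψ
  have hψG : ∀ i : ℤ, dzG n c f i (i + d0) = ψ i := by
    intro i
    rw [hψ, hφ]
    simp only [dzG]
    rw [show i + d0 - 1 = (i - 1) + d0 by ring, show i + d0 - 2 = (i - 2) + d0 by ring]
  have hψa : ψ a ≠ 0 := by
    rw [hψ]
    simp only [ha0 (a - 1) (by omega), ha0 (a - 2) (by omega), mul_zero, sub_zero, add_zero]
    exact mul_ne_zero two_ne_zero hφa
  have hψb : ψ (b + 2) ≠ 0 := by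
    have : ψ (b + 2) = φ b := by
      simp only [hψ]
      rw [show b + 2 - 1 = b + 1 by ring, show b + 2 - 2 = b by ring,
        hb0 (b + 2) (by omega), hb0 (b + 1) (by omega)]
      ring
    rwa [this]
  -- a third nonzero value of ψ strictly between a and b+2
  have hthird : ∃ m, a < m ∧ m < b + 2 ∧ ψ m ≠ 0 := by
    by_contra hcon; push_neg at hcon
    have key : ∀ k : ℕ, (k : ℤ) ≤ b - a + 1 → φ (b - k) = ((2 : K) ^ (k + 1) - 1) * φ b := by
      intro k
      induction k using Nat.strong_induction_on with
      | _ k ih =>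
        match k with
        | 0 => intro _; norm_num
        | 1 =>
          intro hk
          have h1 : ψ (b + 1) = 0 := hcon (b + 1) (by omega) (by omega)
          simp only [hψ] at h1
          rw [show b + 1 - 1 = b by ring, show b + 1 - 2 = b - 1 by ring,
            hb0 (b + 1) (by omega)] at h1
          push_cast
          linear_combination h1
        | (k + 2) =>
          intro hk
          have e1 := ih (k + 1) (by omega) (by push_cast; omega)
          have e0 := ih k (by omega) (by push_cast; omega)
          have h1 : ψ (b - k) = 0 := hcon (b - k) (by push_cast; omega) (by push_cast; omega)
          simp only [hψ] at h1
          push_cast at h1 e1 e0 ⊢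
          rw [show b - (k : ℤ) - 1 = b - ((k : ℤ) + 1) by ring,
            show b - (k : ℤ) - 2 = b - ((k : ℤ) + 2) by ring] at h1
          linear_combination h1 + 3 * e1 - 2 * e0
    set m0 : ℕ := (b - a + 1).toNat with hm0
    have hM := key m0 (by omega)
    rw [show b - (m0 : ℤ) = a - 1 by omega, ha0 (a - 1) (by omega)] at hM
    rcases mul_eq_zero.mp hM.symm with h | h
    · have h2 : ((2 : K)) ^ (m0 + 1) = ((1 : ℕ) : K) := by
        rw [Nat.cast_one]; linear_combination h
      rw [show ((2 : K)) = ((2 : ℕ) : K) by norm_num, ← Nat.cast_pow, Nat.cast_inj] at h2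
      have : 2 ≤ 2 ^ (m0 + 1) := by
        calc 2 = 2 ^ 1 := by norm_num
        _ ≤ 2 ^ (m0 + 1) := Nat.pow_le_pow_right (by norm_num) (by omega)
      omega
    · exact hφb h
  obtain ⟨m, ham, hmb, hψm⟩ := hthird
  -- bounds for indices where ψ is nonzero
  have hψbound : ∀ i, ψ i ≠ 0 → 0 ≤ i ∧ i < (n : ℤ) + 1 ∧ 0 ≤ i + d0 ∧ i + d0 < (c : ℤ) := by
    intro i h
    have k0 : φ i ≠ 0 ∨ φ (i - 1) ≠ 0 ∨ φ (i - 2) ≠ 0 := by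
      by_contra hz; push_neg at hz
      rw [hψ] at h
      simp only [hz.1, hz.2.1, hz.2.2, mul_zero, sub_zero, add_zero] at h
      exact h rfl
    rcases k0 with h' | h' | h' <;> · have := hsupp _ h'; omega
  -- vanishing below the minimal diagonal
  have hGlow : ∀ i j : ℤ, j - i < d0 → dzG n c f i j = 0 := by
    intro i j h
    have e0 : dzExt n c f i j = 0 := by
      by_contra h'; exact absurd (hlow _ _ h') (by omega)
    have e1 : dzExt n c f (i - 1) (j - 1) = 0 := by
      by_contra h'; exact absurd (hlow _ _ h') (by omega)
    have e2 : dzExt n c f (i - 2) (j - 2) = 0 := by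
      by_contra h'; exact absurd (hlow _ _ h') (by omega)
    simp [dzG, e0, e1, e2]
  -- index bounds for the three chosen diagonal positions
  have hB1 := hψbound a hψa
  have hB2 := hψbound m hψm
  have hB3 := hψbound (b + 2) hψb
  -- the three rows and columns
  set x : Fin 3 → ℤ := ![a, m, b + 2] with hx
  have hxlt : ∀ t u : Fin 3, t < u → x t < x u := by
    intro t u htu
    fin_cases t <;> fin_cases u <;>
      first
        | exact absurd htu (by decide)
        | (simp [hx]; omega)
  have hxb : ∀ t : Fin 3, 0 ≤ x t ∧ x t < (n : ℤ) + 1 ∧ 0 ≤ x t + d0 ∧ x t + d0 < (c : ℤ) := by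
    intro t
    fin_cases t <;> simp [hx] <;> omega
  let r : Fin 3 → Fin (n + 1) := fun t => ⟨(x t).toNat, by have := hxb t; omega⟩
  let s : Fin 3 → Fin c := fun t => ⟨(x t + d0).toNat, by have := hxb t; omega⟩
  set v : Fin 3 → (Fin (n + 1) → K) := fun k => (dzMat n c f)ᵀ (s k) with hv
  have hval : ∀ t u : Fin 3, v u (r t) = dzG n c f (x t) (x u + d0) := by
    intro t u
    show dzMat n c f (r t) (s u) = _
    simp only [dzMat, Matrix.of_apply]
    have h1 := hxb t; have h2 := hxb u
    congr 1 <;> simp only [r, s, Fin.val_mk] <;> omega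
  have hdiag : ∀ t : Fin 3, v t (r t) = ψ (x t) := by
    intro t; rw [hval t t, hψG]
  have hlowtri : ∀ t u : Fin 3, u < t → v u (r t) = 0 := by
    intro t u htu
    rw [hval t u]
    exact hGlow _ _ (by have := hxlt u t htu; omega)
  have hψx : ∀ t : Fin 3, ψ (x t) ≠ 0 := by
    intro t
    fin_cases t
    · simpa [hx] using hψa
    · simpa [hx] using hψm
    · simpa [hx] using hψb
  -- the three columns are linearly independent
  have hli : LinearIndependent K v := by
    rw [Fintype.linearIndependent_iff]
    intro g hg
    have hrow : ∀ t : Fin 3, g 0 * v 0 (r t) + g 1 * v 1 (r t) + g 2 * v 2 (r t) = 0 := by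
      intro t
      have := congrFun hg (r t)
      simpa [Finset.sum_apply, Fin.sum_univ_three] using this
    have h2 : g 2 = 0 := by
      have := hrow 2
      rw [hlowtri 2 0 (by decide), hlowtri 2 1 (by decide), hdiag 2] at this
      have h' : g 2 * ψ (x 2) = 0 := by linear_combination this
      exact (mul_eq_zero.mp h').resolve_right (hψx 2)
    have h1 : g 1 = 0 := by
      have := hrow 1
      rw [hlowtri 1 0 (by decide), hdiag 1, h2] at this
      have h' : g 1 * ψ (x 1) = 0 := by linear_combination this
      exact (mul_eq_zero.mp h').resolve_right (hψx 1)
    have h0 : g 0 = 0 := by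
      have := hrow 0
      rw [hdiag 0, h1, h2] at this
      have h' : g 0 * ψ (x 0) = 0 := by linear_combination this
      exact (mul_eq_zero.mp h').resolve_right (hψx 0)
    intro t; fin_cases t <;> assumption
  -- conclude on the rank
  have hspan : Submodule.span K (Set.range v) ≤
      Submodule.span K (Set.range (dzMat n c f)ᵀ) :=
    Submodule.span_mono (by rintro _ ⟨k, rfl⟩; exact ⟨s k, rfl⟩)
  calc (3 : ℕ) = Fintype.card (Fin 3) := by simp
    _ = Module.finrank K (Submodule.span K (Set.range v)) := (finrank_span_eq_card hli).symm
    _ ≤ Module.finrank K (Submodule.span K (Set.range (dzMat n c f)ᵀ)) :=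
        Submodule.finrank_mono hspan
    _ = (dzMat n c f).rank := (Matrix.rank_eq_finrank_span_cols _).symm

lemma dzExt_add {n c : ℕ} (f g : Matrix (Fin (n - 1)) (Fin (c - 2)) K) (i j : ℤ) :
    dzExt n c (f + g) i j = dzExt n c f i j + dzExt n c g i j := by
  unfold dzExt; split <;> simp [Matrix.add_apply]

lemma dzExt_smul {n c : ℕ} (a : K) (f : Matrix (Fin (n - 1)) (Fin (c - 2)) K) (i j : ℤ) :
    dzExt n c (a • f) i j = a * dzExt n c f i j := by
  unfold dzExt; split <;> simp [Matrix.smul_apply]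

/-- The construction of Example 12, as a linear map. -/
noncomputable def dzL (K : Type*) [Field K] (n c : ℕ) :
    Matrix (Fin (n - 1)) (Fin (c - 2)) K →ₗ[K] Matrix (Fin (n + 1)) (Fin c) K where
  toFun := dzMat n c
  map_add' f g := by
    ext i j
    simp only [dzMat, dzG, Matrix.of_apply, Matrix.add_apply, dzExt_add]
    ring
  map_smul' a f := by
    ext i j
    simp only [dzMat, dzG, Matrix.of_apply, Matrix.smul_apply, dzExt_smul, RingHom.id_apply,
      smul_eq_mul]
    ring

end DrezetAux

/-- **Sharpness of the bound in Drézet's construction for `p = 1`.** There is a linear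
subspace `H` of the space of `(n+1) × c` matrices of dimension `(n−1)(c−2)
= (n+1)c − 2c − 2n + 2` all of whose nonzero elements have rank at least 3
(equivalently `H ∩ D^{⊕c} = 0` for every 2-dimensional subspace `D ⊆ K^{n+1}`). -/
theorem stmt6 {K : Type*} [Field K] [IsAlgClosed K] [CharZero K]
    (n c : ℕ) (hn : 2 ≤ n) (hc : 2 ≤ c) :
    ∃ H : Submodule K (Matrix (Fin (n + 1)) (Fin c) K),
      Module.finrank K H = (n - 1) * (c - 2) ∧
      ∀ M ∈ H, M ≠ 0 → 3 ≤ M.rank := by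
  refine ⟨LinearMap.range (dzL K n c), ?_, ?_⟩
  · have hinj : Function.Injective (dzL K n c) := by
      rw [← LinearMap.ker_eq_bot, LinearMap.ker_eq_bot']
      intro f hf0
      by_contra hf
      have h3 := dzMat_rank n c f hf
      have : (dzL K n c) f = dzMat n c f := rfl
      rw [this] at hf0
      rw [hf0, Matrix.rank_zero] at h3
      omega
    rw [LinearMap.finrank_range_of_inj hinj, Module.finrank_matrix,
      Module.finrank_self, Fintype.card_fin, Fintype.card_fin, mul_one]
  · rintro M ⟨f, rfl⟩ hM
    have hf : f ≠ 0 := by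
      rintro rfl
      exact hM (map_zero _)
    exact dzMat_rank n c f hf
end

section
/- Let K be an algebraically closed field of characteristic 0 and c ≥ 3 an integer, and let A_c be the explicit c×(2c+2) matrix of linear forms in the variables x, y, t over K defined in the context. Then: (i) rank A_c(p) = c for every p ∈ K³ \ {0}; (ii) the 2c+2 columns of A_c are linearly independent over K, i.e. there is no nonzero v ∈ K^{2c+2} with A_c(p)·v = 0 for all p ∈ K³; (iii) for every 2-dimensional subspace W ⊆ K³ the space {v ∈ K^{2c+2} : A_c(w)·v = 0 for all w ∈ W} has dimension exactly 2. (This is the claim of Example 9: A_c defines a 1-type uniform Steiner bundle on P² of the minimal rank c+2 with c₁ = −c and splitting type (−1^c, 0²) on every line.) -/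
open Matrix

/-- Column index (1-based) of the `x` entry of row `j` of the matrix `A_c`:
`(p₁,p₂,p_j) = (1,4,2j+1)`. -/
def pcol (j : ℕ) : ℕ := if j = 1 then 1 else if j = 2 then 4 else 2 * j + 1

/-- Column index (1-based) of the `y` entry of row `j` of the matrix `A_c`:
`(q₁,q₂,q_j) = (2,5,2j+2)`. -/
def qcol (j : ℕ) : ℕ := pcol j + 1

/-- The entry of the matrix `A_c` in (1-based) row `i` and column `j`, evaluated at
`(x, y, t) = (p 0, p 1, p 2)`.  Rows `1` and `2` are `x` at `pcol i`, `y` at `qcol i`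
and `t` at `qcol i + 1`; row `i ≥ 3` is `x` at `2i+1`, `y` at `2i+2`, `t` at
`pcol (i−2)` and `t` at `qcol (i−1)`. -/
def AcEnt {R : Type*} [CommRing R] (p : Fin 3 → R) (i j : ℕ) : R :=
  if i ≤ 2 then
    (if j = pcol i then p 0 else 0) + (if j = qcol i then p 1 else 0) +
      (if j = qcol i + 1 then p 2 else 0)
  else
    (if j = 2 * i + 1 then p 0 else 0) + (if j = 2 * i + 2 then p 1 else 0) +
      (if j = pcol (i - 2) then p 2 else 0) + (if j = qcol (i - 1) then p 2 else 0)

/-- The explicit `c × (2c+2)` matrix `A_c` of Example 9, evaluated at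
`(x, y, t) = (p 0, p 1, p 2)`. -/
def Ac {R : Type*} [CommRing R] (c : ℕ) (p : Fin 3 → R) :
    Matrix (Fin c) (Fin (2 * c + 2)) R :=
  fun i j => AcEnt p ((i : ℕ) + 1) ((j : ℕ) + 1)

section Helpers

variable {K : Type*} [Field K]

lemma acEnt_linear (p q : Fin 3 → K) (a b : K) (i j : ℕ) :
    AcEnt (a • p + b • q) i j = a * AcEnt p i j + b * AcEnt q i j := by
  simp only [AcEnt, Pi.add_apply, Pi.smul_apply, smul_eq_mul]
  split_ifs <;> ring

lemma acEnt_split (p : Fin 3 → K) (m j : ℕ) (hm : 1 ≤ m) :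
    AcEnt p m j =
        (if j = pcol m then p 0 else 0) + (if j = qcol m then p 1 else 0)
      + (if m ≤ 2 ∧ j = qcol m + 1 then p 2 else 0)
      + (if 3 ≤ m ∧ j = pcol (m - 2) then p 2 else 0)
      + (if 3 ≤ m ∧ j = qcol (m - 1) then p 2 else 0) := by
  rcases le_or_gt m 2 with h | h
  · rw [AcEnt, if_pos h]
    simp only [eq_true h, eq_false (show ¬ 3 ≤ m by omega), true_and, false_and, if_false]
    ring
  · rw [AcEnt, if_neg (by omega)]
    have h1 : pcol m = 2 * m + 1 := by unfold pcol; split_ifs <;> omega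
    have h2 : qcol m = 2 * m + 2 := by unfold qcol; rw [h1]
    rw [h1, h2]
    simp only [eq_false (show ¬ m ≤ 2 by omega), eq_true (show 3 ≤ m by omega), true_and, false_and, if_false]
    ring

lemma sum_pick (c r : ℕ) (hr1 : 1 ≤ r) (hrc : r ≤ c) (f : ℕ → K) (cond : ℕ → Prop)
    [DecidablePred cond] (hcr : cond r) (huniq : ∀ i, i < c → cond (i + 1) → i + 1 = r) :
    (∑ i ∈ Finset.range c, if cond (i + 1) then f (i + 1) else 0) = f r := by
  rw [Finset.sum_eq_single_of_mem (r - 1) (Finset.mem_range.2 (by omega))]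
  · rw [show r - 1 + 1 = r by omega, if_pos hcr]
  · intro i hi hne
    rw [if_neg]
    intro hcond
    have := huniq i (Finset.mem_range.1 hi) hcond
    omega

lemma sum_none (c : ℕ) (f : ℕ → K) (cond : ℕ → Prop) [DecidablePred cond]
    (h : ∀ i, i < c → ¬ cond (i + 1)) :
    (∑ i ∈ Finset.range c, if cond (i + 1) then f (i + 1) else 0) = 0 :=
  Finset.sum_eq_zero fun i hi => if_neg (h i (Finset.mem_range.1 hi))

lemma S_split (c : ℕ) (z : ℕ → Fin 3 → K) (j : ℕ) :
    (∑ i ∈ Finset.range c, AcEnt (z (i + 1)) (i + 1) j)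
    = (∑ i ∈ Finset.range c, if j = pcol (i + 1) then z (i + 1) 0 else 0)
    + (∑ i ∈ Finset.range c, if j = qcol (i + 1) then z (i + 1) 1 else 0)
    + (∑ i ∈ Finset.range c, if i + 1 ≤ 2 ∧ j = qcol (i + 1) + 1 then z (i + 1) 2 else 0)
    + (∑ i ∈ Finset.range c, if 3 ≤ i + 1 ∧ j = pcol (i + 1 - 2) then z (i + 1) 2 else 0)
    + (∑ i ∈ Finset.range c, if 3 ≤ i + 1 ∧ j = qcol (i + 1 - 1) then z (i + 1) 2 else 0) := by
  rw [← Finset.sum_add_distrib, ← Finset.sum_add_distrib, ← Finset.sum_add_distrib,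
    ← Finset.sum_add_distrib]
  exact Finset.sum_congr rfl fun i _ => acEnt_split _ _ _ (by omega)

lemma S_col1 (c : ℕ) (hc : 3 ≤ c) (z : ℕ → Fin 3 → K) :
    (∑ i ∈ Finset.range c, AcEnt (z (i + 1)) (i + 1) (1)) = z 1 0 + z 3 2 := by
  rw [S_split]
  have h1 : (∑ i ∈ Finset.range c, if (1 : ℕ) = pcol (i + 1) then z (i + 1) 0 else 0) = z (1) 0 :=
    sum_pick c (1) (by omega) (by omega) (fun m => z m 0) (fun m => (1 : ℕ) = pcol m)
        (by simp only [qcol, pcol]; split_ifs <;> omega) (fun i _ hcond => by simp only [qcol, pcol] at hcond; split_ifs at hcond <;> omega)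
  have h2 : (∑ i ∈ Finset.range c, if (1 : ℕ) = qcol (i + 1) then z (i + 1) 1 else 0) = 0 :=
    sum_none c (fun m => z m 1) (fun m => (1 : ℕ) = qcol m) (fun i _ hcond => by simp only [qcol, pcol] at hcond; split_ifs at hcond <;> omega)
  have h3 : (∑ i ∈ Finset.range c, if i + 1 ≤ 2 ∧ (1 : ℕ) = qcol (i + 1) + 1 then z (i + 1) 2 else 0) = 0 :=
    sum_none c (fun m => z m 2) (fun m => m ≤ 2 ∧ (1 : ℕ) = qcol m + 1) (fun i _ hcond => by obtain ⟨ha, he⟩ := hcond; simp only [qcol, pcol] at he; split_ifs at he <;> omega)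
  have h4 : (∑ i ∈ Finset.range c, if 3 ≤ i + 1 ∧ (1 : ℕ) = pcol (i + 1 - 2) then z (i + 1) 2 else 0) = z (3) 2 :=
    sum_pick c (3) (by omega) (hc) (fun m => z m 2) (fun m => 3 ≤ m ∧ (1 : ℕ) = pcol (m - 2))
        (⟨by omega, by simp only [qcol, pcol]; split_ifs <;> omega⟩) (fun i _ hcond => by obtain ⟨ha, he⟩ := hcond; simp only [qcol, pcol] at he; split_ifs at he <;> omega)
  have h5 : (∑ i ∈ Finset.range c, if 3 ≤ i + 1 ∧ (1 : ℕ) = qcol (i + 1 - 1) then z (i + 1) 2 else 0) = 0 :=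
    sum_none c (fun m => z m 2) (fun m => 3 ≤ m ∧ (1 : ℕ) = qcol (m - 1)) (fun i _ hcond => by obtain ⟨ha, he⟩ := hcond; simp only [qcol, pcol] at he; split_ifs at he <;> omega)
  rw [h1, h2, h3, h4, h5]; ring

lemma S_col2 (c : ℕ) (hc : 3 ≤ c) (z : ℕ → Fin 3 → K) :
    (∑ i ∈ Finset.range c, AcEnt (z (i + 1)) (i + 1) (2)) = z 1 1 := by
  rw [S_split]
  have h1 : (∑ i ∈ Finset.range c, if (2 : ℕ) = pcol (i + 1) then z (i + 1) 0 else 0) = 0 :=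
    sum_none c (fun m => z m 0) (fun m => (2 : ℕ) = pcol m) (fun i _ hcond => by simp only [qcol, pcol] at hcond; split_ifs at hcond <;> omega)
  have h2 : (∑ i ∈ Finset.range c, if (2 : ℕ) = qcol (i + 1) then z (i + 1) 1 else 0) = z (1) 1 :=
    sum_pick c (1) (by omega) (by omega) (fun m => z m 1) (fun m => (2 : ℕ) = qcol m)
        (by simp only [qcol, pcol]; split_ifs <;> omega) (fun i _ hcond => by simp only [qcol, pcol] at hcond; split_ifs at hcond <;> omega)
  have h3 : (∑ i ∈ Finset.range c, if i + 1 ≤ 2 ∧ (2 : ℕ) = qcol (i + 1) + 1 then z (i + 1) 2 else 0) = 0 :=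
    sum_none c (fun m => z m 2) (fun m => m ≤ 2 ∧ (2 : ℕ) = qcol m + 1) (fun i _ hcond => by obtain ⟨ha, he⟩ := hcond; simp only [qcol, pcol] at he; split_ifs at he <;> omega)
  have h4 : (∑ i ∈ Finset.range c, if 3 ≤ i + 1 ∧ (2 : ℕ) = pcol (i + 1 - 2) then z (i + 1) 2 else 0) = 0 :=
    sum_none c (fun m => z m 2) (fun m => 3 ≤ m ∧ (2 : ℕ) = pcol (m - 2)) (fun i _ hcond => by obtain ⟨ha, he⟩ := hcond; simp only [qcol, pcol] at he; split_ifs at he <;> omega)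
  have h5 : (∑ i ∈ Finset.range c, if 3 ≤ i + 1 ∧ (2 : ℕ) = qcol (i + 1 - 1) then z (i + 1) 2 else 0) = 0 :=
    sum_none c (fun m => z m 2) (fun m => 3 ≤ m ∧ (2 : ℕ) = qcol (m - 1)) (fun i _ hcond => by obtain ⟨ha, he⟩ := hcond; simp only [qcol, pcol] at he; split_ifs at he <;> omega)
  rw [h1, h2, h3, h4, h5]; ring

lemma S_col3 (c : ℕ) (hc : 3 ≤ c) (z : ℕ → Fin 3 → K) :
    (∑ i ∈ Finset.range c, AcEnt (z (i + 1)) (i + 1) (3)) = z 1 2 := by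
  rw [S_split]
  have h1 : (∑ i ∈ Finset.range c, if (3 : ℕ) = pcol (i + 1) then z (i + 1) 0 else 0) = 0 :=
    sum_none c (fun m => z m 0) (fun m => (3 : ℕ) = pcol m) (fun i _ hcond => by simp only [qcol, pcol] at hcond; split_ifs at hcond <;> omega)
  have h2 : (∑ i ∈ Finset.range c, if (3 : ℕ) = qcol (i + 1) then z (i + 1) 1 else 0) = 0 :=
    sum_none c (fun m => z m 1) (fun m => (3 : ℕ) = qcol m) (fun i _ hcond => by simp only [qcol, pcol] at hcond; split_ifs at hcond <;> omega)
  have h3 : (∑ i ∈ Finset.range c, if i + 1 ≤ 2 ∧ (3 : ℕ) = qcol (i + 1) + 1 then z (i + 1) 2 else 0) = z (1) 2 :=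
    sum_pick c (1) (by omega) (by omega) (fun m => z m 2) (fun m => m ≤ 2 ∧ (3 : ℕ) = qcol m + 1)
        (⟨by omega, by simp only [qcol, pcol]; split_ifs <;> omega⟩) (fun i _ hcond => by obtain ⟨ha, he⟩ := hcond; simp only [qcol, pcol] at he; split_ifs at he <;> omega)
  have h4 : (∑ i ∈ Finset.range c, if 3 ≤ i + 1 ∧ (3 : ℕ) = pcol (i + 1 - 2) then z (i + 1) 2 else 0) = 0 :=
    sum_none c (fun m => z m 2) (fun m => 3 ≤ m ∧ (3 : ℕ) = pcol (m - 2)) (fun i _ hcond => by obtain ⟨ha, he⟩ := hcond; simp only [qcol, pcol] at he; split_ifs at he <;> omega)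
  have h5 : (∑ i ∈ Finset.range c, if 3 ≤ i + 1 ∧ (3 : ℕ) = qcol (i + 1 - 1) then z (i + 1) 2 else 0) = 0 :=
    sum_none c (fun m => z m 2) (fun m => 3 ≤ m ∧ (3 : ℕ) = qcol (m - 1)) (fun i _ hcond => by obtain ⟨ha, he⟩ := hcond; simp only [qcol, pcol] at he; split_ifs at he <;> omega)
  rw [h1, h2, h3, h4, h5]; ring

lemma S_col4 (c : ℕ) (hc : 3 ≤ c) (z : ℕ → Fin 3 → K) (hs : ∀ m, c < m → z m = 0) :
    (∑ i ∈ Finset.range c, AcEnt (z (i + 1)) (i + 1) (4)) = z 2 0 + z 4 2 := by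
  rw [S_split]
  have h1 : (∑ i ∈ Finset.range c, if (4 : ℕ) = pcol (i + 1) then z (i + 1) 0 else 0) = z (2) 0 :=
    sum_pick c (2) (by omega) (by omega) (fun m => z m 0) (fun m => (4 : ℕ) = pcol m)
        (by simp only [qcol, pcol]; split_ifs <;> omega) (fun i _ hcond => by simp only [qcol, pcol] at hcond; split_ifs at hcond <;> omega)
  have h2 : (∑ i ∈ Finset.range c, if (4 : ℕ) = qcol (i + 1) then z (i + 1) 1 else 0) = 0 :=
    sum_none c (fun m => z m 1) (fun m => (4 : ℕ) = qcol m) (fun i _ hcond => by simp only [qcol, pcol] at hcond; split_ifs at hcond <;> omega)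
  have h3 : (∑ i ∈ Finset.range c, if i + 1 ≤ 2 ∧ (4 : ℕ) = qcol (i + 1) + 1 then z (i + 1) 2 else 0) = 0 :=
    sum_none c (fun m => z m 2) (fun m => m ≤ 2 ∧ (4 : ℕ) = qcol m + 1) (fun i _ hcond => by obtain ⟨ha, he⟩ := hcond; simp only [qcol, pcol] at he; split_ifs at he <;> omega)
  have h4 : (∑ i ∈ Finset.range c, if 3 ≤ i + 1 ∧ (4 : ℕ) = pcol (i + 1 - 2) then z (i + 1) 2 else 0) = z (4) 2 := by
    rcases le_or_gt (4) c with hcase | hcase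
    · exact sum_pick c (4) (by omega) (hcase) (fun m => z m 2) (fun m => 3 ≤ m ∧ (4 : ℕ) = pcol (m - 2))
        (⟨by omega, by simp only [qcol, pcol]; split_ifs <;> omega⟩) (fun i _ hcond => by obtain ⟨ha, he⟩ := hcond; simp only [qcol, pcol] at he; split_ifs at he <;> omega)
    · rw [sum_none c (fun m => z m 2) (fun m => 3 ≤ m ∧ (4 : ℕ) = pcol (m - 2)) (fun i _ hcond => by obtain ⟨ha, he⟩ := hcond; simp only [qcol, pcol] at he; split_ifs at he <;> omega), hs (4) hcase]
      simp
  have h5 : (∑ i ∈ Finset.range c, if 3 ≤ i + 1 ∧ (4 : ℕ) = qcol (i + 1 - 1) then z (i + 1) 2 else 0) = 0 :=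
    sum_none c (fun m => z m 2) (fun m => 3 ≤ m ∧ (4 : ℕ) = qcol (m - 1)) (fun i _ hcond => by obtain ⟨ha, he⟩ := hcond; simp only [qcol, pcol] at he; split_ifs at he <;> omega)
  rw [h1, h2, h3, h4, h5]; ring

lemma S_col5 (c : ℕ) (hc : 3 ≤ c) (z : ℕ → Fin 3 → K) :
    (∑ i ∈ Finset.range c, AcEnt (z (i + 1)) (i + 1) (5)) = z 2 1 + z 3 2 := by
  rw [S_split]
  have h1 : (∑ i ∈ Finset.range c, if (5 : ℕ) = pcol (i + 1) then z (i + 1) 0 else 0) = 0 :=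
    sum_none c (fun m => z m 0) (fun m => (5 : ℕ) = pcol m) (fun i _ hcond => by simp only [qcol, pcol] at hcond; split_ifs at hcond <;> omega)
  have h2 : (∑ i ∈ Finset.range c, if (5 : ℕ) = qcol (i + 1) then z (i + 1) 1 else 0) = z (2) 1 :=
    sum_pick c (2) (by omega) (by omega) (fun m => z m 1) (fun m => (5 : ℕ) = qcol m)
        (by simp only [qcol, pcol]; split_ifs <;> omega) (fun i _ hcond => by simp only [qcol, pcol] at hcond; split_ifs at hcond <;> omega)
  have h3 : (∑ i ∈ Finset.range c, if i + 1 ≤ 2 ∧ (5 : ℕ) = qcol (i + 1) + 1 then z (i + 1) 2 else 0) = 0 :=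
    sum_none c (fun m => z m 2) (fun m => m ≤ 2 ∧ (5 : ℕ) = qcol m + 1) (fun i _ hcond => by obtain ⟨ha, he⟩ := hcond; simp only [qcol, pcol] at he; split_ifs at he <;> omega)
  have h4 : (∑ i ∈ Finset.range c, if 3 ≤ i + 1 ∧ (5 : ℕ) = pcol (i + 1 - 2) then z (i + 1) 2 else 0) = 0 :=
    sum_none c (fun m => z m 2) (fun m => 3 ≤ m ∧ (5 : ℕ) = pcol (m - 2)) (fun i _ hcond => by obtain ⟨ha, he⟩ := hcond; simp only [qcol, pcol] at he; split_ifs at he <;> omega)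
  have h5 : (∑ i ∈ Finset.range c, if 3 ≤ i + 1 ∧ (5 : ℕ) = qcol (i + 1 - 1) then z (i + 1) 2 else 0) = z (3) 2 :=
    sum_pick c (3) (by omega) (hc) (fun m => z m 2) (fun m => 3 ≤ m ∧ (5 : ℕ) = qcol (m - 1))
        (⟨by omega, by simp only [qcol, pcol]; split_ifs <;> omega⟩) (fun i _ hcond => by obtain ⟨ha, he⟩ := hcond; simp only [qcol, pcol] at he; split_ifs at he <;> omega)
  rw [h1, h2, h3, h4, h5]; ring

lemma S_col6 (c : ℕ) (hc : 3 ≤ c) (z : ℕ → Fin 3 → K) :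
    (∑ i ∈ Finset.range c, AcEnt (z (i + 1)) (i + 1) (6)) = z 2 2 := by
  rw [S_split]
  have h1 : (∑ i ∈ Finset.range c, if (6 : ℕ) = pcol (i + 1) then z (i + 1) 0 else 0) = 0 :=
    sum_none c (fun m => z m 0) (fun m => (6 : ℕ) = pcol m) (fun i _ hcond => by simp only [qcol, pcol] at hcond; split_ifs at hcond <;> omega)
  have h2 : (∑ i ∈ Finset.range c, if (6 : ℕ) = qcol (i + 1) then z (i + 1) 1 else 0) = 0 :=
    sum_none c (fun m => z m 1) (fun m => (6 : ℕ) = qcol m) (fun i _ hcond => by simp only [qcol, pcol] at hcond; split_ifs at hcond <;> omega)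
  have h3 : (∑ i ∈ Finset.range c, if i + 1 ≤ 2 ∧ (6 : ℕ) = qcol (i + 1) + 1 then z (i + 1) 2 else 0) = z (2) 2 :=
    sum_pick c (2) (by omega) (by omega) (fun m => z m 2) (fun m => m ≤ 2 ∧ (6 : ℕ) = qcol m + 1)
        (⟨by omega, by simp only [qcol, pcol]; split_ifs <;> omega⟩) (fun i _ hcond => by obtain ⟨ha, he⟩ := hcond; simp only [qcol, pcol] at he; split_ifs at he <;> omega)
  have h4 : (∑ i ∈ Finset.range c, if 3 ≤ i + 1 ∧ (6 : ℕ) = pcol (i + 1 - 2) then z (i + 1) 2 else 0) = 0 :=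
    sum_none c (fun m => z m 2) (fun m => 3 ≤ m ∧ (6 : ℕ) = pcol (m - 2)) (fun i _ hcond => by obtain ⟨ha, he⟩ := hcond; simp only [qcol, pcol] at he; split_ifs at he <;> omega)
  have h5 : (∑ i ∈ Finset.range c, if 3 ≤ i + 1 ∧ (6 : ℕ) = qcol (i + 1 - 1) then z (i + 1) 2 else 0) = 0 :=
    sum_none c (fun m => z m 2) (fun m => 3 ≤ m ∧ (6 : ℕ) = qcol (m - 1)) (fun i _ hcond => by obtain ⟨ha, he⟩ := hcond; simp only [qcol, pcol] at he; split_ifs at he <;> omega)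
  rw [h1, h2, h3, h4, h5]; ring

lemma S_odd (c k : ℕ) (hc : 3 ≤ c) (hk : 3 ≤ k) (hkc : k ≤ c) (z : ℕ → Fin 3 → K) (hs : ∀ m, c < m → z m = 0) :
    (∑ i ∈ Finset.range c, AcEnt (z (i + 1)) (i + 1) (2 * k + 1)) = z k 0 + z (k + 2) 2 := by
  rw [S_split]
  have h1 : (∑ i ∈ Finset.range c, if (2 * k + 1 : ℕ) = pcol (i + 1) then z (i + 1) 0 else 0) = z (k) 0 :=
    sum_pick c (k) (by omega) (hkc) (fun m => z m 0) (fun m => (2 * k + 1 : ℕ) = pcol m)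
        (by simp only [qcol, pcol]; split_ifs <;> omega) (fun i _ hcond => by simp only [qcol, pcol] at hcond; split_ifs at hcond <;> omega)
  have h2 : (∑ i ∈ Finset.range c, if (2 * k + 1 : ℕ) = qcol (i + 1) then z (i + 1) 1 else 0) = 0 :=
    sum_none c (fun m => z m 1) (fun m => (2 * k + 1 : ℕ) = qcol m) (fun i _ hcond => by simp only [qcol, pcol] at hcond; split_ifs at hcond <;> omega)
  have h3 : (∑ i ∈ Finset.range c, if i + 1 ≤ 2 ∧ (2 * k + 1 : ℕ) = qcol (i + 1) + 1 then z (i + 1) 2 else 0) = 0 :=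
    sum_none c (fun m => z m 2) (fun m => m ≤ 2 ∧ (2 * k + 1 : ℕ) = qcol m + 1) (fun i _ hcond => by obtain ⟨ha, he⟩ := hcond; simp only [qcol, pcol] at he; split_ifs at he <;> omega)
  have h4 : (∑ i ∈ Finset.range c, if 3 ≤ i + 1 ∧ (2 * k + 1 : ℕ) = pcol (i + 1 - 2) then z (i + 1) 2 else 0) = z (k + 2) 2 := by
    rcases le_or_gt (k + 2) c with hcase | hcase
    · exact sum_pick c (k + 2) (by omega) (hcase) (fun m => z m 2) (fun m => 3 ≤ m ∧ (2 * k + 1 : ℕ) = pcol (m - 2))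
        (⟨by omega, by simp only [qcol, pcol]; split_ifs <;> omega⟩) (fun i _ hcond => by obtain ⟨ha, he⟩ := hcond; simp only [qcol, pcol] at he; split_ifs at he <;> omega)
    · rw [sum_none c (fun m => z m 2) (fun m => 3 ≤ m ∧ (2 * k + 1 : ℕ) = pcol (m - 2)) (fun i _ hcond => by obtain ⟨ha, he⟩ := hcond; simp only [qcol, pcol] at he; split_ifs at he <;> omega), hs (k + 2) hcase]
      simp
  have h5 : (∑ i ∈ Finset.range c, if 3 ≤ i + 1 ∧ (2 * k + 1 : ℕ) = qcol (i + 1 - 1) then z (i + 1) 2 else 0) = 0 :=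
    sum_none c (fun m => z m 2) (fun m => 3 ≤ m ∧ (2 * k + 1 : ℕ) = qcol (m - 1)) (fun i _ hcond => by obtain ⟨ha, he⟩ := hcond; simp only [qcol, pcol] at he; split_ifs at he <;> omega)
  rw [h1, h2, h3, h4, h5]; ring

lemma S_even (c k : ℕ) (hc : 3 ≤ c) (hk : 3 ≤ k) (hkc : k ≤ c) (z : ℕ → Fin 3 → K) (hs : ∀ m, c < m → z m = 0) :
    (∑ i ∈ Finset.range c, AcEnt (z (i + 1)) (i + 1) (2 * k + 2)) = z k 1 + z (k + 1) 2 := by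
  rw [S_split]
  have h1 : (∑ i ∈ Finset.range c, if (2 * k + 2 : ℕ) = pcol (i + 1) then z (i + 1) 0 else 0) = 0 :=
    sum_none c (fun m => z m 0) (fun m => (2 * k + 2 : ℕ) = pcol m) (fun i _ hcond => by simp only [qcol, pcol] at hcond; split_ifs at hcond <;> omega)
  have h2 : (∑ i ∈ Finset.range c, if (2 * k + 2 : ℕ) = qcol (i + 1) then z (i + 1) 1 else 0) = z (k) 1 :=
    sum_pick c (k) (by omega) (hkc) (fun m => z m 1) (fun m => (2 * k + 2 : ℕ) = qcol m)
        (by simp only [qcol, pcol]; split_ifs <;> omega) (fun i _ hcond => by simp only [qcol, pcol] at hcond; split_ifs at hcond <;> omega)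
  have h3 : (∑ i ∈ Finset.range c, if i + 1 ≤ 2 ∧ (2 * k + 2 : ℕ) = qcol (i + 1) + 1 then z (i + 1) 2 else 0) = 0 :=
    sum_none c (fun m => z m 2) (fun m => m ≤ 2 ∧ (2 * k + 2 : ℕ) = qcol m + 1) (fun i _ hcond => by obtain ⟨ha, he⟩ := hcond; simp only [qcol, pcol] at he; split_ifs at he <;> omega)
  have h4 : (∑ i ∈ Finset.range c, if 3 ≤ i + 1 ∧ (2 * k + 2 : ℕ) = pcol (i + 1 - 2) then z (i + 1) 2 else 0) = 0 :=
    sum_none c (fun m => z m 2) (fun m => 3 ≤ m ∧ (2 * k + 2 : ℕ) = pcol (m - 2)) (fun i _ hcond => by obtain ⟨ha, he⟩ := hcond; simp only [qcol, pcol] at he; split_ifs at he <;> omega)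
  have h5 : (∑ i ∈ Finset.range c, if 3 ≤ i + 1 ∧ (2 * k + 2 : ℕ) = qcol (i + 1 - 1) then z (i + 1) 2 else 0) = z (k + 1) 2 := by
    rcases le_or_gt (k + 1) c with hcase | hcase
    · exact sum_pick c (k + 1) (by omega) (hcase) (fun m => z m 2) (fun m => 3 ≤ m ∧ (2 * k + 2 : ℕ) = qcol (m - 1))
        (⟨by omega, by simp only [qcol, pcol]; split_ifs <;> omega⟩) (fun i _ hcond => by obtain ⟨ha, he⟩ := hcond; simp only [qcol, pcol] at he; split_ifs at he <;> omega)
    · rw [sum_none c (fun m => z m 2) (fun m => 3 ≤ m ∧ (2 * k + 2 : ℕ) = qcol (m - 1)) (fun i _ hcond => by obtain ⟨ha, he⟩ := hcond; simp only [qcol, pcol] at he; split_ifs at he <;> omega), hs (k + 1) hcase]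
      simp
  rw [h1, h2, h3, h4, h5]; ring


lemma cramer2 (T1 T2 Y1 Y2 α' β' α β : K)
    (hT : T1 ≠ 0 ∨ T2 ≠ 0) (hl1 : α' * T1 + β' * T2 = 0) (hl2 : α' * Y1 + β' * Y2 ≠ 0)
    (h1 : α * T1 + β * T2 = 0) (h2 : α * Y1 + β * Y2 = 0) : α = 0 ∧ β = 0 := by
  have hdet : α * β' - α' * β = 0 := by
    rcases hT with h | h
    · have e0 : (α * β' - α' * β) * T1 = 0 := by
        rw [show (α * β' - α' * β) * T1 = β' * (α * T1 + β * T2) - β * (α' * T1 + β' * T2) by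
          ring, h1, hl1]; ring
      exact (mul_eq_zero.mp e0).resolve_right h
    · have e0 : (α * β' - α' * β) * T2 = 0 := by
        rw [show (α * β' - α' * β) * T2 = α * (α' * T1 + β' * T2) - α' * (α * T1 + β * T2) by
          ring, h1, hl1]; ring
      exact (mul_eq_zero.mp e0).resolve_right h
  constructor
  · have e : α * (α' * Y1 + β' * Y2) = 0 := by
      rw [show α * (α' * Y1 + β' * Y2) = α' * (α * Y1 + β * Y2) + (α * β' - α' * β) * Y2 by ring,
        h2, hdet]; ring
    exact (mul_eq_zero.mp e).resolve_right hl2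
  · have e : β * (α' * Y1 + β' * Y2) = 0 := by
      rw [show β * (α' * Y1 + β' * Y2) = β' * (α * Y1 + β * Y2) - (α * β' - α' * β) * Y1 by ring,
        h2, hdet]; ring
    exact (mul_eq_zero.mp e).resolve_right hl2

lemma kern (c : ℕ) (hc : 3 ≤ c) (w1 w2 : Fin 3 → K) (a b : ℕ → K)
    (z : ℕ → Fin 3 → K) (hzdef : ∀ m, z m = a m • w1 + b m • w2)
    (hz0 : z 0 = 0) (hsupp : ∀ m, c < m → z m = 0)
    (ht1 : z 1 2 = 0) (ht2 : z 2 2 = 0)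
    (hx : ∀ k, 1 ≤ k → k ≤ c → z k 0 + z (k + 2) 2 = 0)
    (hy : ∀ k, 1 ≤ k → k ≤ c → z k 1 + z (k + 1) 2 = 0) :
    ∀ m, z m = 0 := by
  have hcoord : ∀ m (i : Fin 3), z m i = a m * w1 i + b m * w2 i := by
    intro m i
    rw [hzdef m]
    simp [Pi.add_apply, Pi.smul_apply, smul_eq_mul]
  have hfin : ∀ m, z m 0 = 0 → z m 1 = 0 → z m 2 = 0 → z m = 0 := by
    intro m e0 e1 e2
    funext i
    fin_cases i <;> simpa
  by_cases hC2 : w1 2 = 0 ∧ w2 2 = 0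
  · have hT : ∀ m, z m 2 = 0 := by
      intro m; rw [hcoord, hC2.1, hC2.2]; ring
    have hY : ∀ m, z m 1 = 0 := by
      intro m
      by_cases hm : 1 ≤ m ∧ m ≤ c
      · have := hy m hm.1 hm.2
        rw [hT (m + 1)] at this
        simpa using this
      · rcases (by omega : m = 0 ∨ c < m) with h | h
        · rw [h, hz0]; rfl
        · rw [hsupp m h]; rfl
    have hX : ∀ m, z m 0 = 0 := by
      intro m
      by_cases hm : 1 ≤ m ∧ m ≤ c
      · have := hx m hm.1 hm.2
        rw [hT (m + 2)] at this
        simpa using this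
      · rcases (by omega : m = 0 ∨ c < m) with h | h
        · rw [h, hz0]; rfl
        · rw [hsupp m h]; rfl
    exact fun m => hfin m (hX m) (hY m) (hT m)
  · by_cases hC1 : ∀ α β : K, α * w1 2 + β * w2 2 = 0 → α * w1 1 + β * w2 1 = 0
    · have hT : ∀ m, z m 2 = 0 := by
        intro m
        induction m using Nat.strong_induction_on with
        | _ m IH =>
          rcases (by omega : m = 0 ∨ m = 1 ∨ m = 2 ∨ (3 ≤ m ∧ m ≤ c) ∨ c < m) with h | h | h | h | h
          · rw [h, hz0]; rfl
          · rw [h]; exact ht1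
          · rw [h]; exact ht2
          · have hy1 := hy (m - 1) (by omega) (by omega)
            rw [show m - 1 + 1 = m by omega] at hy1
            have e1 : z (m - 1) 1 = 0 := by
              rw [hcoord]
              exact hC1 _ _ (by rw [← hcoord]; exact IH (m - 1) (by omega))
            rw [e1] at hy1
            simpa using hy1
          · rw [hsupp m h]; rfl
      have hY : ∀ m, z m 1 = 0 := by
        intro m
        rw [hcoord]
        exact hC1 _ _ (by rw [← hcoord]; exact hT m)
      have hX : ∀ m, z m 0 = 0 := by
        intro m
        by_cases hm : 1 ≤ m ∧ m ≤ c
        · have := hx m hm.1 hm.2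
          rw [hT (m + 2)] at this
          simpa using this
        · rcases (by omega : m = 0 ∨ c < m) with h | h
          · rw [h, hz0]; rfl
          · rw [hsupp m h]; rfl
      exact fun m => hfin m (hX m) (hY m) (hT m)
    · push_neg at hC1
      obtain ⟨α', β', hl1, hl2⟩ := hC1
      have hTne : w1 2 ≠ 0 ∨ w2 2 ≠ 0 := by
        by_contra h
        push_neg at h
        exact hC2 ⟨h.1, h.2⟩
      intro m
      induction m using Nat.strong_induction_on with
      | _ m IH =>
        rcases (by omega : m = 0 ∨ (1 ≤ m ∧ m ≤ c) ∨ c < m) with h | h | h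
        · rw [h]; exact hz0
        · have tm : z m 2 = 0 := by
            rcases (by omega : m = 1 ∨ m = 2 ∨ 3 ≤ m) with h1 | h1 | h1
            · rw [h1]; exact ht1
            · rw [h1]; exact ht2
            · have hy1 := hy (m - 1) (by omega) (by omega)
              rw [show m - 1 + 1 = m by omega, IH (m - 1) (by omega)] at hy1
              simpa using hy1
          have ym : z m 1 = 0 := by
            have hy1 := hy m h.1 h.2
            have e2 : z (m + 1) 2 = 0 := by
              rcases (by omega : c < m + 1 ∨ m = 1 ∨ (2 ≤ m ∧ m + 1 ≤ c)) with h2 | h2 | h2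
              · rw [hsupp (m + 1) h2]; rfl
              · rw [h2]; exact ht2
              · have hx1 := hx (m - 1) (by omega) (by omega)
                rw [show m - 1 + 2 = m + 1 by omega, IH (m - 1) (by omega)] at hx1
                simpa using hx1
            rw [e2] at hy1
            simpa using hy1
          have := cramer2 (w1 2) (w2 2) (w1 1) (w2 1) α' β' (a m) (b m) hTne hl1 hl2
            (by rw [← hcoord]; exact tm) (by rw [← hcoord]; exact ym)
          rw [hzdef m, this.1, this.2]
          simp
        · exact hsupp m h

lemma master (c : ℕ) (hc : 3 ≤ c) (w1 w2 : Fin 3 → K)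
    (hind : ∀ a b : K, a • w1 + b • w2 = 0 → a = 0 ∧ b = 0)
    (u1 u2 : Fin c → K)
    (h : u1 ᵥ* (Ac c w1) + u2 ᵥ* (Ac c w2) = 0) : u1 = 0 ∧ u2 = 0 := by
  classical
  set a : ℕ → K := fun m => if hm : 1 ≤ m ∧ m ≤ c then u1 ⟨m - 1, by omega⟩ else 0 with ha
  set b : ℕ → K := fun m => if hm : 1 ≤ m ∧ m ≤ c then u2 ⟨m - 1, by omega⟩ else 0 with hb
  set z : ℕ → Fin 3 → K := fun m => a m • w1 + b m • w2 with hz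
  have hab : ∀ i : Fin c, a ((i : ℕ) + 1) = u1 i ∧ b ((i : ℕ) + 1) = u2 i := by
    intro i
    have hm : 1 ≤ (i : ℕ) + 1 ∧ (i : ℕ) + 1 ≤ c := ⟨by omega, by have := i.isLt; omega⟩
    constructor
    · rw [ha]; simp only [dif_pos hm]; congr 1
    · rw [hb]; simp only [dif_pos hm]; congr 1
  have hsupp : ∀ m, c < m → z m = 0 := by
    intro m hm
    have hno : ¬ (1 ≤ m ∧ m ≤ c) := by omega
    rw [hz]; simp only [ha, hb, dif_neg hno]; simp
  have hz0 : z 0 = 0 := by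
    have hno : ¬ (1 ≤ 0 ∧ 0 ≤ c) := by omega
    rw [hz]; simp only [ha, hb, dif_neg hno]; simp
  have HS : ∀ j, 1 ≤ j → j ≤ 2 * c + 2 →
      (∑ i ∈ Finset.range c, AcEnt (z (i + 1)) (i + 1) j) = 0 := by
    intro j hj1 hj2
    have h0 := congrFun h (⟨j - 1, by omega⟩ : Fin (2 * c + 2))
    simp only [Pi.add_apply, Pi.zero_apply, Matrix.vecMul, dotProduct, Ac] at h0
    rw [← Finset.sum_add_distrib] at h0
    simp only [show j - 1 + 1 = j by omega] at h0
    calc (∑ i ∈ Finset.range c, AcEnt (z (i + 1)) (i + 1) j)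
        = ∑ i : Fin c, AcEnt (z ((i : ℕ) + 1)) ((i : ℕ) + 1) j :=
          (Fin.sum_univ_eq_sum_range (fun i => AcEnt (z (i + 1)) (i + 1) j) c).symm
      _ = ∑ i : Fin c, (u1 i * AcEnt w1 ((i : ℕ) + 1) j + u2 i * AcEnt w2 ((i : ℕ) + 1) j) := by
          refine Finset.sum_congr rfl fun i _ => ?_
          rw [hz]
          simp only
          rw [acEnt_linear, (hab i).1, (hab i).2]
      _ = 0 := h0
  have ht1 : z 1 2 = 0 := by
    have := HS 3 (by omega) (by omega)
    rwa [S_col3 c hc z] at this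
  have ht2 : z 2 2 = 0 := by
    have := HS 6 (by omega) (by omega)
    rwa [S_col6 c hc z] at this
  have hxx : ∀ k, 1 ≤ k → k ≤ c → z k 0 + z (k + 2) 2 = 0 := by
    intro k h1 h2
    rcases (by omega : k = 1 ∨ k = 2 ∨ 3 ≤ k) with hk | hk | hk
    · subst hk
      have := HS 1 (by omega) (by omega)
      rwa [S_col1 c hc z] at this
    · subst hk
      have := HS 4 (by omega) (by omega)
      rwa [S_col4 c hc z hsupp] at this
    · have := HS (2 * k + 1) (by omega) (by omega)
      rwa [S_odd c k hc hk h2 z hsupp] at this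
  have hyy : ∀ k, 1 ≤ k → k ≤ c → z k 1 + z (k + 1) 2 = 0 := by
    intro k h1 h2
    rcases (by omega : k = 1 ∨ k = 2 ∨ 3 ≤ k) with hk | hk | hk
    · subst hk
      have e1 := HS 2 (by omega) (by omega)
      rw [S_col2 c hc z] at e1
      rw [e1, ht2]; ring
    · subst hk
      have := HS 5 (by omega) (by omega)
      rwa [S_col5 c hc z] at this
    · have := HS (2 * k + 2) (by omega) (by omega)
      rwa [S_even c k hc hk h2 z hsupp] at this
  have hall := kern c hc w1 w2 a b z (fun m => rfl) hz0 hsupp ht1 ht2 hxx hyy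
  constructor <;> funext i
  · have h1 := hall ((i : ℕ) + 1)
    rw [hz] at h1
    simp only at h1
    have := hind _ _ h1
    rw [(hab i).1] at this
    exact this.1
  · have h1 := hall ((i : ℕ) + 1)
    rw [hz] at h1
    simp only at h1
    have := hind _ _ h1
    rw [(hab i).2] at this
    exact this.2

def exv (s : ℕ) : Fin 3 → K := fun k => if (k : ℕ) = s then 1 else 0

lemma ite_one_add (P Q : Prop) [Decidable P] [Decidable Q] (hpq : ¬ (P ∧ Q)) :
    ((if P then (1 : K) else 0) + (if Q then 1 else 0)) = if P ∨ Q then 1 else 0 := by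
  split_ifs <;> simp_all

lemma acEnt_ex0 (r col : ℕ) :
    AcEnt (exv 0 : Fin 3 → K) r col
      = if (r ≤ 2 ∧ col = pcol r) ∨ (3 ≤ r ∧ col = 2 * r + 1) then 1 else 0 := by
  have e0 : (exv 0 : Fin 3 → K) 0 = 1 := by simp [exv]
  have e1 : (exv 0 : Fin 3 → K) 1 = 0 := by simp [exv]
  have e2 : (exv 0 : Fin 3 → K) 2 = 0 := by simp [exv]
  rcases le_or_gt r 2 with h | h
  · rw [AcEnt, if_pos h, e0, e1, e2]
    simp only [eq_true h, eq_false (show ¬ 3 ≤ r by omega), true_and, false_and, or_false,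
      ite_self, add_zero]
  · rw [AcEnt, if_neg (by omega), e0, e1, e2]
    simp only [eq_false (show ¬ r ≤ 2 by omega), eq_true (show 3 ≤ r by omega), true_and,
      false_and, false_or, ite_self, add_zero, zero_add]

lemma acEnt_ex1 (r col : ℕ) :
    AcEnt (exv 1 : Fin 3 → K) r col
      = if (r ≤ 2 ∧ col = qcol r) ∨ (3 ≤ r ∧ col = 2 * r + 2) then 1 else 0 := by
  have e0 : (exv 1 : Fin 3 → K) 0 = 0 := by simp [exv]
  have e1 : (exv 1 : Fin 3 → K) 1 = 1 := by simp [exv]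
  have e2 : (exv 1 : Fin 3 → K) 2 = 0 := by simp [exv]
  rcases le_or_gt r 2 with h | h
  · rw [AcEnt, if_pos h, e0, e1, e2]
    simp only [eq_true h, eq_false (show ¬ 3 ≤ r by omega), true_and, false_and, or_false,
      ite_self, add_zero, zero_add]
  · rw [AcEnt, if_neg (by omega), e0, e1, e2]
    simp only [eq_false (show ¬ r ≤ 2 by omega), eq_true (show 3 ≤ r by omega), true_and,
      false_and, false_or, ite_self, add_zero, zero_add]

lemma acEnt_ex2 (r col : ℕ) :
    AcEnt (exv 2 : Fin 3 → K) r col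
      = if (r ≤ 2 ∧ col = qcol r + 1) ∨ (3 ≤ r ∧ (col = pcol (r - 2) ∨ col = qcol (r - 1)))
        then 1 else 0 := by
  have e0 : (exv 2 : Fin 3 → K) 0 = 0 := by simp [exv]
  have e1 : (exv 2 : Fin 3 → K) 1 = 0 := by simp [exv]
  have e2 : (exv 2 : Fin 3 → K) 2 = 1 := by simp [exv]
  rcases le_or_gt r 2 with h | h
  · rw [AcEnt, if_pos h, e0, e1, e2]
    simp only [eq_true h, eq_false (show ¬ 3 ≤ r by omega), true_and, false_and, or_false,
      ite_self, add_zero, zero_add]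
  · rw [AcEnt, if_neg (by omega), e0, e1, e2]
    simp only [eq_false (show ¬ r ≤ 2 by omega), eq_true (show 3 ≤ r by omega), true_and,
      false_and, false_or, ite_self, add_zero, zero_add]
    exact ite_one_add _ _ (by
      rintro ⟨ha, hb⟩
      have : pcol (r - 2) ≠ qcol (r - 1) := by
        simp only [qcol, pcol]; split_ifs <;> omega
      exact this (ha ▸ hb ▸ rfl))

lemma row_single {c : ℕ} (p : Fin 3 → K) (v : Fin (2 * c + 2) → K)
    (hv : (Ac c p).mulVec v = 0) (i : Fin c) (j : Fin (2 * c + 2))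
    (hone : AcEnt p ((i : ℕ) + 1) ((j : ℕ) + 1) = 1)
    (hzero : ∀ j' : Fin (2 * c + 2), j' ≠ j → AcEnt p ((i : ℕ) + 1) ((j' : ℕ) + 1) = 0) :
    v j = 0 := by
  have h0 := congrFun hv i
  simp only [Matrix.mulVec, dotProduct, Ac, Pi.zero_apply] at h0
  rw [Finset.sum_eq_single j (fun j' _ hne => by rw [hzero j' hne, zero_mul])
    (fun hj => absurd (Finset.mem_univ j) hj)] at h0
  rwa [hone, one_mul] at h0

lemma exists_indep (p : Fin 3 → K) (hp : p ≠ 0) :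
    ∃ w2 : Fin 3 → K, ∀ a b : K, a • p + b • w2 = 0 → a = 0 ∧ b = 0 := by
  have hne : (Submodule.span K {p}) ≠ ⊤ := by
    intro h
    have h1 : Module.finrank K (Submodule.span K ({p} : Set (Fin 3 → K))) = 1 :=
      finrank_span_singleton hp
    rw [h] at h1
    have h2 : Module.finrank K (⊤ : Submodule K (Fin 3 → K)) = 3 := by
      rw [finrank_top]
      simp [Module.finrank_pi]
    omega
  obtain ⟨w2, hw2⟩ : ∃ w2, w2 ∉ Submodule.span K ({p} : Set (Fin 3 → K)) := by
    by_contra h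
    push_neg at h
    exact hne (Submodule.eq_top_iff'.mpr h)
  refine ⟨w2, fun a b hab => ?_⟩
  by_cases hb : b = 0
  · subst hb
    rw [zero_smul, add_zero] at hab
    rcases smul_eq_zero.mp hab with h | h
    · exact ⟨h, rfl⟩
    · exact absurd h hp
  · exfalso
    apply hw2
    have : w2 = (-(b⁻¹ * a)) • p := by
      have h1 : b • w2 = -(a • p) := by
        have : a • p + b • w2 - a • p = 0 - a • p := by rw [hab]
        calc b • w2 = a • p + b • w2 - a • p := by abel
        _ = 0 - a • p := this
        _ = -(a • p) := by abel
      have := congrArg (fun x => b⁻¹ • x) h1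
      rw [smul_smul, inv_mul_cancel₀ hb, one_smul] at this
      rw [this, smul_neg, smul_smul, neg_smul]
    rw [this]
    exact Submodule.smul_mem _ _ (Submodule.mem_span_singleton_self p)

end Helpers

/-- **Example 9 (general `c`).** The explicit matrix `A_c` defines a 1-type uniform
Steiner bundle on P² of the minimal rank `c + 2` with `c₁ = −c`: (i) `A_c(p)` has rank
`c` for all `p ≠ 0`; (ii) the columns of `A_c` are linearly independent over `K`;
(iii) for every 2-dimensional subspace `W ⊆ K³` the common kernel of the evaluations
`A_c(w)`, `w ∈ W`, has dimension exactly `2` (splitting type `(−1^c, 0²)` on every line). -/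
theorem stmt8 {K : Type*} [Field K] [IsAlgClosed K] [CharZero K]
    (c : ℕ) (hc : 3 ≤ c) :
    (∀ p : Fin 3 → K, p ≠ 0 → (Ac c p).rank = c) ∧
    (∀ v : Fin (2 * c + 2) → K,
      (∀ p : Fin 3 → K, (Ac c p).mulVec v = 0) → v = 0) ∧
    (∀ W : Submodule K (Fin 3 → K), Module.finrank K W = 2 →
      Module.finrank K
        (⨅ w ∈ W, LinearMap.ker (Ac c w).mulVecLin : Submodule K (Fin (2 * c + 2) → K))
        = 2) := by
  refine ⟨?_, ?_, ?_⟩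
  · -- (i)
    intro p hp
    obtain ⟨w2, hind⟩ := exists_indep p hp
    have hinj : Function.Injective ((Ac c p)ᵀ).mulVecLin := by
      rw [← LinearMap.ker_eq_bot, LinearMap.ker_eq_bot']
      intro u hu
      have h1 : u ᵥ* (Ac c p) = 0 := by
        simpa [Matrix.mulVecLin_apply] using hu
      have h2 : u ᵥ* (Ac c p) + (0 : Fin c → K) ᵥ* (Ac c w2) = 0 := by
        rw [h1, Matrix.zero_vecMul, add_zero]
      exact (master c hc p w2 hind u 0 h2).1
    rw [← Matrix.rank_transpose, Matrix.rank, LinearMap.finrank_range_of_inj hinj]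
    simp [Module.finrank_pi]
  · -- (ii)
    intro v hv
    funext j
    show v j = 0
    have hvne : ∀ j' : Fin (2 * c + 2), j' ≠ j → ((j' : ℕ) ≠ (j : ℕ)) :=
      fun j' h e => h (Fin.ext e)
    have hjlt : (j : ℕ) < 2 * c + 2 := j.isLt
    rcases (show (j : ℕ) = 0 ∨ (j : ℕ) = 1 ∨ (j : ℕ) = 2 ∨ (j : ℕ) = 3 ∨ (j : ℕ) = 4 ∨
        (j : ℕ) = 5 ∨ (6 ≤ (j : ℕ) ∧ (j : ℕ) % 2 = 0) ∨ (7 ≤ (j : ℕ) ∧ (j : ℕ) % 2 = 1)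
        by omega) with h | h | h | h | h | h | h | h
    · refine row_single (exv 0) v (hv _) ⟨0, by omega⟩ j ?_ ?_
      · show AcEnt (exv 0) (0 + 1) ((j : ℕ) + 1) = 1
        rw [h, acEnt_ex0, if_pos]
        exact Or.inl ⟨by omega, by norm_num [pcol]⟩
      · intro j' hne
        have hvv := hvne j' hne
        rw [h] at hvv
        show AcEnt (exv 0) (0 + 1) ((j' : ℕ) + 1) = 0
        rw [acEnt_ex0, if_neg]
        rintro (⟨h1, h2⟩ | ⟨h1, h2⟩)
        · rw [show pcol (0 + 1) = 1 by norm_num [pcol]] at h2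
          omega
        · omega
    · refine row_single (exv 1) v (hv _) ⟨0, by omega⟩ j ?_ ?_
      · show AcEnt (exv 1) (0 + 1) ((j : ℕ) + 1) = 1
        rw [h, acEnt_ex1, if_pos]
        exact Or.inl ⟨by omega, by norm_num [qcol, pcol]⟩
      · intro j' hne
        have hvv := hvne j' hne
        rw [h] at hvv
        show AcEnt (exv 1) (0 + 1) ((j' : ℕ) + 1) = 0
        rw [acEnt_ex1, if_neg]
        rintro (⟨h1, h2⟩ | ⟨h1, h2⟩)
        · rw [show qcol (0 + 1) = 2 by norm_num [qcol, pcol]] at h2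
          omega
        · omega
    · refine row_single (exv 2) v (hv _) ⟨0, by omega⟩ j ?_ ?_
      · show AcEnt (exv 2) (0 + 1) ((j : ℕ) + 1) = 1
        rw [h, acEnt_ex2, if_pos]
        exact Or.inl ⟨by omega, by norm_num [qcol, pcol]⟩
      · intro j' hne
        have hvv := hvne j' hne
        rw [h] at hvv
        show AcEnt (exv 2) (0 + 1) ((j' : ℕ) + 1) = 0
        rw [acEnt_ex2, if_neg]
        rintro (⟨h1, h2⟩ | ⟨h1, h2⟩)
        · rw [show qcol (0 + 1) + 1 = 3 by norm_num [qcol, pcol]] at h2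
          omega
        · omega
    · refine row_single (exv 0) v (hv _) ⟨1, by omega⟩ j ?_ ?_
      · show AcEnt (exv 0) (1 + 1) ((j : ℕ) + 1) = 1
        rw [h, acEnt_ex0, if_pos]
        exact Or.inl ⟨by omega, by norm_num [pcol]⟩
      · intro j' hne
        have hvv := hvne j' hne
        rw [h] at hvv
        show AcEnt (exv 0) (1 + 1) ((j' : ℕ) + 1) = 0
        rw [acEnt_ex0, if_neg]
        rintro (⟨h1, h2⟩ | ⟨h1, h2⟩)
        · rw [show pcol (1 + 1) = 4 by norm_num [pcol]] at h2
          omega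
        · omega
    · refine row_single (exv 1) v (hv _) ⟨1, by omega⟩ j ?_ ?_
      · show AcEnt (exv 1) (1 + 1) ((j : ℕ) + 1) = 1
        rw [h, acEnt_ex1, if_pos]
        exact Or.inl ⟨by omega, by norm_num [qcol, pcol]⟩
      · intro j' hne
        have hvv := hvne j' hne
        rw [h] at hvv
        show AcEnt (exv 1) (1 + 1) ((j' : ℕ) + 1) = 0
        rw [acEnt_ex1, if_neg]
        rintro (⟨h1, h2⟩ | ⟨h1, h2⟩)
        · rw [show qcol (1 + 1) = 5 by norm_num [qcol, pcol]] at h2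
          omega
        · omega
    · refine row_single (exv 2) v (hv _) ⟨1, by omega⟩ j ?_ ?_
      · show AcEnt (exv 2) (1 + 1) ((j : ℕ) + 1) = 1
        rw [h, acEnt_ex2, if_pos]
        exact Or.inl ⟨by omega, by norm_num [qcol, pcol]⟩
      · intro j' hne
        have hvv := hvne j' hne
        rw [h] at hvv
        show AcEnt (exv 2) (1 + 1) ((j' : ℕ) + 1) = 0
        rw [acEnt_ex2, if_neg]
        rintro (⟨h1, h2⟩ | ⟨h1, h2⟩)
        · rw [show qcol (1 + 1) + 1 = 6 by norm_num [qcol, pcol]] at h2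
          omega
        · omega
    · -- even ≥ 6 : x-entry of row (j/2)
      refine row_single (exv 0) v (hv _) ⟨(j : ℕ) / 2 - 1, by omega⟩ j ?_ ?_
      · rw [acEnt_ex0]
        simp only [Fin.val_mk]
        rw [if_pos]
        exact Or.inr ⟨by omega, by omega⟩
      · intro j' hne
        have hvv := hvne j' hne
        rw [acEnt_ex0, if_neg]
        simp only [Fin.val_mk]
        rintro (⟨h1, h2⟩ | ⟨h1, h2⟩)
        · omega
        · omega
    · -- odd ≥ 7 : y-entry of row ((j-1)/2)
      refine row_single (exv 1) v (hv _) ⟨((j : ℕ) - 1) / 2 - 1, by omega⟩ j ?_ ?_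
      · rw [acEnt_ex1]
        simp only [Fin.val_mk]
        rw [if_pos]
        exact Or.inr ⟨by omega, by omega⟩
      · intro j' hne
        have hvv := hvne j' hne
        rw [acEnt_ex1, if_neg]
        simp only [Fin.val_mk]
        rintro (⟨h1, h2⟩ | ⟨h1, h2⟩)
        · omega
        · omega
  · -- (iii)
    intro W hW
    let bW := Module.finBasisOfFinrankEq K W hW
    set w1 : Fin 3 → K := ((bW 0 : W) : Fin 3 → K) with hw1
    set w2 : Fin 3 → K := ((bW 1 : W) : Fin 3 → K) with hw2
    have hmem1 : w1 ∈ W := (bW 0).2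
    have hmem2 : w2 ∈ W := (bW 1).2
    have hind : ∀ a b : K, a • w1 + b • w2 = 0 → a = 0 ∧ b = 0 := by
      intro a b hab
      have h0 : a • bW 0 + b • bW 1 = (0 : W) := by
        apply Subtype.ext
        rw [Submodule.coe_add, Submodule.coe_smul, Submodule.coe_smul, ZeroMemClass.coe_zero,
          ← hw1, ← hw2]
        exact hab
      have hli := Fintype.linearIndependent_iff.mp bW.linearIndependent ![a, b] (by
        rw [Fin.sum_univ_two]
        simpa only [Matrix.cons_val_zero, Matrix.cons_val_one, Matrix.head_cons] using h0)
      exact ⟨hli 0, hli 1⟩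
    have hker : (⨅ w ∈ W, LinearMap.ker (Ac c w).mulVecLin : Submodule K (Fin (2 * c + 2) → K))
        = LinearMap.ker (Ac c w1).mulVecLin ⊓ LinearMap.ker (Ac c w2).mulVecLin := by
      apply le_antisymm
      · exact le_inf (iInf₂_le w1 hmem1) (iInf₂_le w2 hmem2)
      · intro v hv
        rw [Submodule.mem_inf] at hv
        simp only [Submodule.mem_iInf]
        intro w hw
        obtain ⟨r0, r1, hr⟩ : ∃ r0 r1 : K, w = r0 • w1 + r1 • w2 := by
          have hrep := bW.sum_repr ⟨w, hw⟩
          rw [Fin.sum_univ_two] at hrep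
          refine ⟨bW.repr ⟨w, hw⟩ 0, bW.repr ⟨w, hw⟩ 1, ?_⟩
          have := congrArg (Subtype.val : W → (Fin 3 → K)) hrep
          rw [Submodule.coe_add, Submodule.coe_smul, Submodule.coe_smul, ← hw1, ← hw2] at this
          exact this.symm
        rw [LinearMap.mem_ker, Matrix.mulVecLin_apply, hr,
          show Ac c (r0 • w1 + r1 • w2) = r0 • Ac c w1 + r1 • Ac c w2 from by
            ext i jj; simp [Ac, acEnt_linear, Matrix.smul_apply, smul_eq_mul],
          Matrix.add_mulVec, Matrix.smul_mulVec, Matrix.smul_mulVec]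
        have h1 : (Ac c w1) *ᵥ v = 0 := by
          simpa [LinearMap.mem_ker, Matrix.mulVecLin_apply] using hv.1
        have h2 : (Ac c w2) *ᵥ v = 0 := by
          simpa [LinearMap.mem_ker, Matrix.mulVecLin_apply] using hv.2
        rw [h1, h2]
        simp
    rw [hker]
    set B : Matrix (Fin c ⊕ Fin c) (Fin (2 * c + 2)) K :=
      Matrix.fromRows (Ac c w1) (Ac c w2) with hB
    have hkerB : LinearMap.ker B.mulVecLin
        = LinearMap.ker (Ac c w1).mulVecLin ⊓ LinearMap.ker (Ac c w2).mulVecLin := by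
      ext v
      simp only [LinearMap.mem_ker, Matrix.mulVecLin_apply, Submodule.mem_inf, hB,
        Matrix.fromRows_mulVec]
      constructor
      · intro hz
        constructor
        · funext i; exact congrFun hz (Sum.inl i)
        · funext i; exact congrFun hz (Sum.inr i)
      · rintro ⟨ha, hb⟩
        funext s
        rcases s with i | i
        · exact congrFun ha i
        · exact congrFun hb i
    rw [← hkerB]
    have hinj : Function.Injective (Bᵀ).mulVecLin := by
      rw [← LinearMap.ker_eq_bot, LinearMap.ker_eq_bot']
      intro u hu
      have h1 : u ᵥ* B = 0 := by
        simpa [Matrix.mulVecLin_apply] using hu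
      rw [hB, ← Sum.elim_comp_inl_inr u, Matrix.sumElim_vecMul_fromRows] at h1
      have := master c hc w1 w2 hind (u ∘ Sum.inl) (u ∘ Sum.inr) h1
      funext s
      rcases s with i | i
      · exact congrFun this.1 i
      · exact congrFun this.2 i
    have hrankB : B.rank = 2 * c := by
      rw [← Matrix.rank_transpose, Matrix.rank, LinearMap.finrank_range_of_inj hinj]
      simp [Module.finrank_pi]
      omega
    have hrn := LinearMap.finrank_range_add_finrank_ker (B.mulVecLin)
    rw [show Module.finrank K (LinearMap.range B.mulVecLin) = B.rank from rfl, hrankB] at hrn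
    have hd : Module.finrank K (Fin (2 * c + 2) → K) = 2 * c + 2 := by
      simp [Module.finrank_pi]
    rw [hd] at hrn
    omega
end

section
/- Let K be an algebraically closed field of characteristic 0, c ≥ 3 an integer, and A_c the explicit c×(2c+2) matrix of linear forms in x, y, t defined in the context. For each integer d ≥ −1 let μ_d : (S_d)^{2c+2} → (S_{d+1})^c be the K-linear map v ↦ A_c·v, where S_d is the degree-d part of S = K[x,y,t] (S_{−1} = 0). Then for every integer t ≥ −1, dim coker μ_t = max(0, c − 2(t+1)). (This combines Lemma 19 and the vanishing statements of Proposition 20: for the minimal-rank 1-type uniform bundle E_c of Example 9, h¹(E_c(t+1)) = max(0, h¹(E_c(t)) − 2) for all t ≥ −1 and h¹(E_c(−1)) = c; in particular for c odd h¹(E_c((c−3)/2)) = 1 and h¹(E_c(t)) = 0 for t > (c−3)/2, and for c even h¹(E_c((c−4)/2)) = 2 and h¹(E_c(t)) = 0 for t > (c−4)/2.) -/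
open Matrix MvPolynomial

/-- The matrix `A_c` as a matrix of linear forms over `S = K[x,y,t]`,
with `(x, y, t) = (X 0, X 1, X 2)`. -/
noncomputable def AcPoly (K : Type*) [Field K] (c : ℕ) :
    Matrix (Fin c) (Fin (2 * c + 2)) (MvPolynomial (Fin 3) K) :=
  Ac c (fun k => MvPolynomial.X k)

/-- `(S_d)^x`, the space of `x`-tuples of homogeneous polynomials of degree `d` in
`S = K[x,y,t]`, with the convention `S_d = 0` for `d < 0`. -/
noncomputable def homogPi (K : Type*) [Field K] (x : ℕ) (d : ℤ) :
    Submodule K (Fin x → MvPolynomial (Fin 3) K) :=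
  if 0 ≤ d then
    Submodule.pi Set.univ (fun _ => homogeneousSubmodule (Fin 3) K d.toNat)
  else ⊥

/-- `dim coker μ_d`, where `μ_d : (S_d)^{2c+2} → (S_{d+1})^c` is multiplication by the
matrix `A_c`; equivalently `h¹(E_c(d))` for the Steiner bundle `E_c` of Example 9. -/
noncomputable def cokerDimAc (K : Type*) [Field K] (c : ℕ) (d : ℤ) : ℕ :=
  Module.finrank K (homogPi K c (d + 1)) -
    Module.finrank K
      (Submodule.map (LinearMap.restrictScalars K (AcPoly K c).mulVecLin)
        (homogPi K (2 * c + 2) d))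

section aux12

/-- multidegree (a,b,e) as a Finsupp on Fin 3 -/
noncomputable def mdeg (a b e : ℕ) : Fin 3 →₀ ℕ :=
  Finsupp.single 0 a + Finsupp.single 1 b + Finsupp.single 2 e

lemma mdeg_apply (a b e : ℕ) : (mdeg a b e) 0 = a ∧ (mdeg a b e) 1 = b ∧ (mdeg a b e) 2 = e := by
  refine ⟨?_, ?_, ?_⟩ <;> simp [mdeg, Finsupp.single_apply]

lemma degree_eq_sum_univ (d : Fin 3 →₀ ℕ) : d.degree = ∑ i : Fin 3, d i := by
  rw [Finsupp.degree]
  exact Finset.sum_subset (Finset.subset_univ _) (by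
    intro x _ hx
    simpa using (Finsupp.notMem_support_iff.mp hx))

lemma mdeg_degree (a b e : ℕ) : (mdeg a b e).degree = a + b + e := by
  rw [degree_eq_sum_univ, Fin.sum_univ_three,
    (mdeg_apply a b e).1, (mdeg_apply a b e).2.1, (mdeg_apply a b e).2.2]

lemma mdeg_eq_iff {a b e a' b' e' : ℕ} :
    mdeg a b e = mdeg a' b' e' ↔ a = a' ∧ b = b' ∧ e = e' := by
  constructor
  · intro h
    refine ⟨?_, ?_, ?_⟩
    · have := congrFun (congrArg (fun f : Fin 3 →₀ ℕ => (f : Fin 3 → ℕ)) h) 0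
      simpa [mdeg, Finsupp.single_apply] using this
    · have := congrFun (congrArg (fun f : Fin 3 →₀ ℕ => (f : Fin 3 → ℕ)) h) 1
      simpa [mdeg, Finsupp.single_apply] using this
    · have := congrFun (congrArg (fun f : Fin 3 →₀ ℕ => (f : Fin 3 → ℕ)) h) 2
      simpa [mdeg, Finsupp.single_apply] using this
  · rintro ⟨rfl, rfl, rfl⟩; rfl

lemma mdeg_add_x (a b e : ℕ) : Finsupp.single 0 1 + mdeg a b e = mdeg (a+1) b e := by
  ext x; fin_cases x <;> simp [mdeg, Finsupp.single_apply, Nat.add_comm]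
lemma mdeg_add_y (a b e : ℕ) : Finsupp.single 1 1 + mdeg a b e = mdeg a (b+1) e := by
  ext x; fin_cases x <;> simp [mdeg, Finsupp.single_apply, Nat.add_comm]
lemma mdeg_add_t (a b e : ℕ) : Finsupp.single 2 1 + mdeg a b e = mdeg a b (e+1) := by
  ext x; fin_cases x <;> simp [mdeg, Finsupp.single_apply, Nat.add_comm]

section coeffs
variable {K : Type*} [CommRing K] (g : MvPolynomial (Fin 3) K)

lemma coeff_X0_succ (a b e : ℕ) :
    coeff (mdeg (a+1) b e) (X 0 * g) = coeff (mdeg a b e) g := by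
  rw [← mdeg_add_x, coeff_X_mul]
lemma coeff_X1_succ (a b e : ℕ) :
    coeff (mdeg a (b+1) e) (X 1 * g) = coeff (mdeg a b e) g := by
  rw [← mdeg_add_y, coeff_X_mul]
lemma coeff_X2_succ (a b e : ℕ) :
    coeff (mdeg a b (e+1)) (X 2 * g) = coeff (mdeg a b e) g := by
  rw [← mdeg_add_t, coeff_X_mul]

lemma coeff_X0_zero (b e : ℕ) : coeff (mdeg 0 b e) (X 0 * g) = 0 := by
  rw [coeff_X_mul']
  simp [Finsupp.mem_support_iff, (mdeg_apply 0 b e).1]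
lemma coeff_X1_zero (a e : ℕ) : coeff (mdeg a 0 e) (X 1 * g) = 0 := by
  rw [coeff_X_mul']
  simp [Finsupp.mem_support_iff, (mdeg_apply a 0 e).2.1]
lemma coeff_X2_zero (a b : ℕ) : coeff (mdeg a b 0) (X 2 * g) = 0 := by
  rw [coeff_X_mul']
  simp [Finsupp.mem_support_iff, (mdeg_apply a b 0).2.2]
end coeffs

section psi
variable {K : Type*} [CommRing K]

/-- Row contribution to the cokernel functionals. -/
noncomputable def psi (n k : ℕ) (h : MvPolynomial (Fin 3) K) : K :=
  ∑ e ∈ Finset.range (n+2),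
    if 2*e ≤ k ∧ k - 2*e + e ≤ n+1 then
      (-1:K)^e * coeff (mdeg (n+1-(k-2*e)-e) (k-2*e) e) h else 0

lemma psi_add (n k : ℕ) (g h : MvPolynomial (Fin 3) K) :
    psi n k (g + h) = psi n k g + psi n k h := by
  rw [psi, psi, psi, ← Finset.sum_add_distrib]
  refine Finset.sum_congr rfl fun e _ => ?_
  split_ifs with h1
  · rw [coeff_add]; ring
  · rw [add_zero]

lemma psi_smul (n k : ℕ) (r : K) (h : MvPolynomial (Fin 3) K) :
    psi n k (r • h) = r * psi n k h := by
  rw [psi, psi, Finset.mul_sum]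
  refine Finset.sum_congr rfl fun e _ => ?_
  split_ifs with h1
  · rw [MvPolynomial.smul_eq_C_mul, coeff_C_mul]; ring
  · rw [mul_zero]

lemma psi_I1 (n k : ℕ) (g : MvPolynomial (Fin 3) K) :
    psi n (k+2) (X 2 * g) + psi n k (X 0 * g) = 0 := by
  rw [psi, psi, Finset.sum_range_succ']
  nth_rewrite 2 [Finset.sum_range_succ]
  have hT1 : (if 2*(n+1) ≤ k ∧ k - 2*(n+1) + (n+1) ≤ n+1 then
      (-1:K)^(n+1) * coeff (mdeg (n+1-(k-2*(n+1))-(n+1)) (k-2*(n+1)) (n+1)) (X 0 * g) else 0)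
      = 0 := by
    split_ifs with hcond
    · rw [show n+1-(k-2*(n+1))-(n+1) = 0 by omega, coeff_X0_zero, mul_zero]
    · rfl
  have hT2 : (if 2*0 ≤ k+2 ∧ k+2 - 2*0 + 0 ≤ n+1 then
      (-1:K)^0 * coeff (mdeg (n+1-(k+2-2*0)-0) (k+2-2*0) 0) (X 2 * g) else 0) = 0 := by
    split_ifs with hcond
    · rw [coeff_X2_zero, mul_zero]
    · rfl
  rw [hT1, hT2, add_zero, add_zero, ← Finset.sum_add_distrib]
  refine Finset.sum_eq_zero fun e he => ?_
  have he' : e < n + 1 := Finset.mem_range.mp he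
  split_ifs with h1 h2 h2
  · -- both true
    have hk : 2*e ≤ k := by omega
    have hg2 : k - 2*e + e + 1 ≤ n + 1 := by
      rcases h1 with ⟨h1a, h1b⟩; omega
    rw [show k+2-2*(e+1) = k-2*e by omega,
      show n+1-(k-2*e)-(e+1) = n-(k-2*e)-e by omega, coeff_X2_succ,
      show n+1-(k-2*e)-e = (n-(k-2*e)-e)+1 by omega, coeff_X0_succ, pow_succ]
    ring
  · exfalso; omega
  · -- h1 false, h2 true : forced a = 0
    have : n+1-(k-2*e)-e = 0 := by
      rcases h2 with ⟨h2a, h2b⟩; omega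
    rw [this, coeff_X0_zero, mul_zero, zero_add]
  · rw [add_zero]

lemma psi_I3 (n k : ℕ) (g : MvPolynomial (Fin 3) K) :
    psi n (k+1) (X 2 * g) + psi n k (X 1 * g) = 0 := by
  rw [psi, psi, Finset.sum_range_succ']
  nth_rewrite 2 [Finset.sum_range_succ]
  have hT1 : (if 2*(n+1) ≤ k ∧ k - 2*(n+1) + (n+1) ≤ n+1 then
      (-1:K)^(n+1) * coeff (mdeg (n+1-(k-2*(n+1))-(n+1)) (k-2*(n+1)) (n+1)) (X 1 * g) else 0)
      = 0 := by
    split_ifs with hcond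
    · rw [show k-2*(n+1) = 0 by omega, coeff_X1_zero, mul_zero]
    · rfl
  have hT2 : (if 2*0 ≤ k+1 ∧ k+1 - 2*0 + 0 ≤ n+1 then
      (-1:K)^0 * coeff (mdeg (n+1-(k+1-2*0)-0) (k+1-2*0) 0) (X 2 * g) else 0) = 0 := by
    split_ifs with hcond
    · rw [coeff_X2_zero, mul_zero]
    · rfl
  rw [hT1, hT2, add_zero, add_zero, ← Finset.sum_add_distrib]
  refine Finset.sum_eq_zero fun e he => ?_
  have he' : e < n + 1 := Finset.mem_range.mp he
  split_ifs with h1 h2 h2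
  · -- both true
    have hk : 2*e + 1 ≤ k := by omega
    rw [show k+1-2*(e+1) = k-1-2*e by omega, coeff_X2_succ,
      show k-2*e = (k-1-2*e)+1 by omega, coeff_X1_succ,
      show n+1-(k-1-2*e)-(e+1) = n+1-((k-1-2*e)+1)-e by omega, pow_succ]
    ring
  · exfalso; omega
  · -- h1 false, h2 true: forced b = 0
    have : k - 2*e = 0 := by
      rcases h2 with ⟨h2a, h2b⟩; omega
    rw [this, coeff_X1_zero, mul_zero, zero_add]
  · rw [add_zero]

lemma psi_I5 (n k : ℕ) (hk : 2*n+1 ≤ k) (g : MvPolynomial (Fin 3) K) :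
    psi n k (X 0 * g) = 0 := by
  refine Finset.sum_eq_zero fun e he => ?_
  have he' : e < n + 2 := Finset.mem_range.mp he
  split_ifs with h1
  · rw [show n+1-(k-2*e)-e = 0 by omega, coeff_X0_zero, mul_zero]
  · rfl

lemma psi_I6 (n k : ℕ) (hk : 2*n+2 ≤ k) (g : MvPolynomial (Fin 3) K) :
    psi n k (X 1 * g) = 0 := by
  refine Finset.sum_eq_zero fun e he => ?_
  have he' : e < n + 2 := Finset.mem_range.mp he
  split_ifs with h1
  · rw [show k-2*e = 0 by omega, coeff_X1_zero, mul_zero]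
  · rfl

lemma psi_zero_eq (n : ℕ) (h : MvPolynomial (Fin 3) K) :
    psi n 0 h = coeff (mdeg (n+1) 0 0) h := by
  rw [psi]
  rw [Finset.sum_eq_single 0 (fun e _ hne => by
    rw [if_neg]; intro hcond; omega) (fun habs => by simp at habs)]
  rw [if_pos (by omega)]
  norm_num

lemma psi_one_eq (n : ℕ) (h : MvPolynomial (Fin 3) K) :
    psi n 1 h = coeff (mdeg n 1 0) h := by
  rw [psi]
  rw [Finset.sum_eq_single 0 (fun e _ hne => by
    rw [if_neg]; intro hcond; omega) (fun habs => by simp at habs)]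
  rw [if_pos (by omega)]
  norm_num

lemma psi_I2a (n : ℕ) (g : MvPolynomial (Fin 3) K) : psi n 0 (X 2 * g) = 0 := by
  rw [psi_zero_eq, coeff_X2_zero]
lemma psi_I2b (n : ℕ) (g : MvPolynomial (Fin 3) K) : psi n 1 (X 2 * g) = 0 := by
  rw [psi_one_eq, coeff_X2_zero]
lemma psi_I4 (n : ℕ) (g : MvPolynomial (Fin 3) K) : psi n 0 (X 1 * g) = 0 := by
  rw [psi_zero_eq, coeff_X1_zero]

lemma psi_tmon (n k : ℕ) :
    psi n k (monomial (mdeg 0 0 (n+1)) (1:K)) = if k = 2*n+2 then (-1:K)^(n+1) else 0 := by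
  rw [psi]
  rw [Finset.sum_eq_single (n+1) (fun e he hne => ?_) (fun habs => by simp at habs)]
  · split_ifs with h1 h2 h2
    · rw [coeff_monomial, if_pos, mul_one]
      rw [mdeg_eq_iff]; omega
    · exfalso; omega
    · exfalso; omega
    · rfl
  · split_ifs with h1
    · rw [coeff_monomial, if_neg, mul_zero]
      rw [mdeg_eq_iff]; omega
    · rfl

end psi

section pq
lemma pcol_eq_pcol {r r' : ℕ} (h : 1 ≤ r) (h' : 1 ≤ r') : pcol r = pcol r' ↔ r = r' := by
  unfold pcol; split_ifs <;> omega
lemma pcol_eq_odd {r i : ℕ} (h : 1 ≤ r) (hi : 3 ≤ i) : pcol r = 2*i+1 ↔ r = i := by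
  unfold pcol; split_ifs <;> omega
lemma pcol_ne_even {r i : ℕ} (h : 1 ≤ r) (hi : 3 ≤ i) : pcol r ≠ 2*i+2 := by
  unfold pcol; split_ifs <;> omega
lemma pcol_ne_qcol {r r' : ℕ} (h : 1 ≤ r) (h' : 1 ≤ r') : pcol r ≠ qcol r' := by
  unfold qcol pcol; split_ifs <;> omega
lemma qcol_eq_qcol {r r' : ℕ} (h : 1 ≤ r) (h' : 1 ≤ r') : qcol r = qcol r' ↔ r = r' := by
  unfold qcol pcol; split_ifs <;> omega
lemma qcol_eq_even {r i : ℕ} (h : 2 ≤ r) (hi : 3 ≤ i) : qcol r = 2*i+2 ↔ r = i := by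
  unfold qcol pcol; split_ifs <;> omega
lemma qcol_ne_odd {r i : ℕ} (h : 2 ≤ r) (hi : 3 ≤ i) : qcol r ≠ 2*i+1 := by
  unfold qcol pcol; split_ifs <;> omega
lemma qcol_ne_pcol {r r' : ℕ} (h : 1 ≤ r) (h' : 1 ≤ r') : qcol r ≠ pcol r' := by
  unfold qcol pcol; split_ifs <;> omega
lemma qcol_ne_tcol {r i : ℕ} (h : 2 ≤ r) (hi : 1 ≤ i) (hi2 : i ≤ 2) :
    qcol r ≠ qcol i + 1 := by
  unfold qcol pcol; split_ifs <;> omega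
lemma pcol_ne_tcol {r i : ℕ} (h : 1 ≤ r) (hi : 1 ≤ i) (hi2 : i ≤ 2) :
    pcol r ≠ qcol i + 1 := by
  unfold qcol pcol; split_ifs <;> omega
end pq

section entries
variable {R : Type*} [CommRing R] (p : Fin 3 → R)

lemma nat_cases3 (i : ℕ) (hi : 1 ≤ i) : i = 1 ∨ i = 2 ∨ ∃ k, i = k + 3 := by
  rcases i with _ | _ | _ | k
  · omega
  · exact Or.inl rfl
  · exact Or.inr (Or.inl rfl)
  · exact Or.inr (Or.inr ⟨k, rfl⟩)

lemma AcEnt_col2 (i : ℕ) (hi : 1 ≤ i) : AcEnt p i 2 = if i = 1 then p 1 else 0 := by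
  rcases nat_cases3 i hi with rfl | rfl | ⟨k, rfl⟩
  · simp [AcEnt, pcol, qcol]
  · simp [AcEnt, pcol, qcol]
  · simp only [AcEnt, pcol, qcol]
    split_ifs <;> first | (exfalso; omega) | simp

lemma AcEnt_col3 (i : ℕ) (hi : 1 ≤ i) : AcEnt p i 3 = if i = 1 then p 2 else 0 := by
  rcases nat_cases3 i hi with rfl | rfl | ⟨k, rfl⟩
  · simp [AcEnt, pcol, qcol]
  · simp [AcEnt, pcol, qcol]
  · simp only [AcEnt, pcol, qcol]
    split_ifs <;> first | (exfalso; omega) | simp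

lemma AcEnt_col6 (i : ℕ) (hi : 1 ≤ i) : AcEnt p i 6 = if i = 2 then p 2 else 0 := by
  rcases nat_cases3 i hi with rfl | rfl | ⟨k, rfl⟩
  · simp [AcEnt, pcol, qcol]
  · simp [AcEnt, pcol, qcol]
  · simp only [AcEnt, pcol, qcol]
    split_ifs <;> first | (exfalso; omega) | simp


lemma AcEnt_pcol (r i : ℕ) (hr : 1 ≤ r) (hi : 1 ≤ i) :
    AcEnt p i (pcol r) = (if i = r then p 0 else 0) + (if i = r + 2 then p 2 else 0) := by
  by_cases hi2 : i ≤ 2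
  · simp only [AcEnt, if_pos hi2]
    rw [if_neg (pcol_ne_qcol hr hi), if_neg (pcol_ne_tcol hr hi hi2)]
    simp only [pcol_eq_pcol hr hi]
    split_ifs <;> first | (exfalso; omega) | simp
  · simp only [AcEnt, if_neg hi2]
    rw [if_neg (pcol_ne_even hr (by omega)),
      if_neg (pcol_ne_qcol hr (show 1 ≤ i - 1 by omega))]
    simp only [pcol_eq_odd hr (show 3 ≤ i by omega), pcol_eq_pcol hr (show 1 ≤ i - 2 by omega)]
    split_ifs <;> first | (exfalso; omega) | simp

lemma AcEnt_qcol (r i : ℕ) (hr : 2 ≤ r) (hi : 1 ≤ i) :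
    AcEnt p i (qcol r) = (if i = r then p 1 else 0) + (if i = r + 1 then p 2 else 0) := by
  by_cases hi2 : i ≤ 2
  · simp only [AcEnt, if_pos hi2]
    rw [if_neg (qcol_ne_pcol (by omega) hi), if_neg (qcol_ne_tcol hr hi hi2)]
    simp only [qcol_eq_qcol (by omega : 1 ≤ r) hi]
    split_ifs <;> first | (exfalso; omega) | simp
  · simp only [AcEnt, if_neg hi2]
    rw [if_neg (qcol_ne_odd hr (by omega)),
      if_neg (qcol_ne_pcol (by omega : 1 ≤ r) (show 1 ≤ i - 2 by omega))]
    simp only [qcol_eq_even hr (show 3 ≤ i by omega), qcol_eq_qcol (by omega : 1 ≤ r) (show 1 ≤ i - 1 by omega)]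
    split_ifs <;> first | (exfalso; omega) | simp

end entries

section framework
variable {K : Type*} [Field K]

/-- The pure `t`-power monomial of degree `n+1`. -/
noncomputable def tmon (K : Type*) [Field K] (n : ℕ) : MvPolynomial (Fin 3) K :=
  monomial (mdeg 0 0 (n+1)) 1

/-- The image submodule `μ_n (S_n^{2c+2})`. -/
noncomputable def MM (K : Type*) [Field K] (c n : ℕ) :
    Submodule K (Fin c → MvPolynomial (Fin 3) K) :=
  Submodule.map (LinearMap.restrictScalars K (AcPoly K c).mulVecLin)
    (Submodule.pi Set.univ (fun _ : Fin (2*c+2) => homogeneousSubmodule (Fin 3) K n))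

lemma X0_mul_mdeg (a b e : ℕ) (k : K) :
    X 0 * monomial (mdeg a b e) k = monomial (mdeg (a+1) b e) k := by
  rw [X, monomial_mul, one_mul, mdeg_add_x]
lemma X1_mul_mdeg (a b e : ℕ) (k : K) :
    X 1 * monomial (mdeg a b e) k = monomial (mdeg a (b+1) e) k := by
  rw [X, monomial_mul, one_mul, mdeg_add_y]
lemma X2_mul_mdeg (a b e : ℕ) (k : K) :
    X 2 * monomial (mdeg a b e) k = monomial (mdeg a b (e+1)) k := by
  rw [X, monomial_mul, one_mul, mdeg_add_t]

lemma mdeg_mem_homog {a b e m : ℕ} (k : K) (h : a + b + e = m) :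
    (monomial (mdeg a b e) k : MvPolynomial (Fin 3) K) ∈ homogeneousSubmodule (Fin 3) K m :=
  (mem_homogeneousSubmodule _ _).2 (isHomogeneous_monomial _ (by rw [mdeg_degree]; exact h))

lemma tmon_mem_homog (n : ℕ) : tmon K n ∈ homogeneousSubmodule (Fin 3) K (n+1) :=
  mdeg_mem_homog _ (by omega)

lemma single_mem_pi {x m : ℕ} (col : Fin x) (f : MvPolynomial (Fin 3) K)
    (hf : f ∈ homogeneousSubmodule (Fin 3) K m) :
    Pi.single col f ∈
      Submodule.pi Set.univ (fun _ : Fin x => homogeneousSubmodule (Fin 3) K m) := by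
  rw [Submodule.mem_pi]
  intro i _
  rw [Pi.single_apply]
  split_ifs
  · exact hf
  · exact Submodule.zero_mem _

lemma pcol_bound {r : ℕ} : pcol r ≤ 2*r+1 := by unfold pcol; split_ifs <;> omega
lemma pcol_pos {r : ℕ} : 1 ≤ pcol r := by unfold pcol; split_ifs <;> omega
lemma qcol_bound {r : ℕ} : qcol r ≤ 2*r+2 := by unfold qcol pcol; split_ifs <;> omega

variable {c n : ℕ}

lemma mulVecLin_single_val (col : Fin (2*c+2)) (g : MvPolynomial (Fin 3) K) :
    (LinearMap.restrictScalars K (AcPoly K c).mulVecLin) (Pi.single col g) =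
      fun i : Fin c => AcEnt (fun k => X k) ((i:ℕ)+1) ((col:ℕ)+1) * g := by
  funext i
  simp [Matrix.mulVecLin_apply, AcPoly, Ac]

lemma col_val_pcol {r : ℕ} (hr1 : 1 ≤ r) (hrc : r ≤ c) (col : Fin (2*c+2))
    (hcol : (col:ℕ) + 1 = pcol r) (g : MvPolynomial (Fin 3) K) :
    (LinearMap.restrictScalars K (AcPoly K c).mulVecLin) (Pi.single col g) =
      Pi.single (⟨r-1, by omega⟩ : Fin c) (X 0 * g) +
        (if h : r+1 < c then Pi.single (⟨r+1, h⟩ : Fin c) (X 2 * g) else 0) := by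
  rw [mulVecLin_single_val]
  funext i
  have hlt := i.isLt
  rw [hcol, AcEnt_pcol _ r ((i:ℕ)+1) hr1 (by omega)]
  by_cases h : r + 1 < c
  · simp only [dif_pos h, Pi.add_apply, Pi.single_apply, Fin.ext_iff]
    split_ifs <;> first | (exfalso; omega) | ring
  · simp only [dif_neg h, Pi.add_apply, Pi.zero_apply, Pi.single_apply, Fin.ext_iff]
    split_ifs <;> first | (exfalso; omega) | ring

lemma col_val_qcol {r : ℕ} (hr1 : 2 ≤ r) (hrc : r ≤ c) (col : Fin (2*c+2))
    (hcol : (col:ℕ) + 1 = qcol r) (g : MvPolynomial (Fin 3) K) :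
    (LinearMap.restrictScalars K (AcPoly K c).mulVecLin) (Pi.single col g) =
      Pi.single (⟨r-1, by omega⟩ : Fin c) (X 1 * g) +
        (if h : r < c then Pi.single (⟨r, h⟩ : Fin c) (X 2 * g) else 0) := by
  rw [mulVecLin_single_val]
  funext i
  have hlt := i.isLt
  rw [hcol, AcEnt_qcol _ r ((i:ℕ)+1) hr1 (by omega)]
  by_cases h : r < c
  · simp only [dif_pos h, Pi.add_apply, Pi.single_apply, Fin.ext_iff]
    split_ifs <;> first | (exfalso; omega) | ring
  · simp only [dif_neg h, Pi.add_apply, Pi.zero_apply, Pi.single_apply, Fin.ext_iff]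
    split_ifs <;> first | (exfalso; omega) | ring

lemma col_val_2 (hc : 1 ≤ c) (col : Fin (2*c+2)) (hcol : (col:ℕ) + 1 = 2)
    (g : MvPolynomial (Fin 3) K) :
    (LinearMap.restrictScalars K (AcPoly K c).mulVecLin) (Pi.single col g) =
      Pi.single (⟨0, by omega⟩ : Fin c) (X 1 * g) := by
  rw [mulVecLin_single_val]
  funext i
  have hlt := i.isLt
  rw [hcol, AcEnt_col2 _ ((i:ℕ)+1) (by omega)]
  simp only [Pi.single_apply, Fin.ext_iff]
  split_ifs <;> first | (exfalso; omega) | ring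

lemma col_val_3 (hc : 1 ≤ c) (col : Fin (2*c+2)) (hcol : (col:ℕ) + 1 = 3)
    (g : MvPolynomial (Fin 3) K) :
    (LinearMap.restrictScalars K (AcPoly K c).mulVecLin) (Pi.single col g) =
      Pi.single (⟨0, by omega⟩ : Fin c) (X 2 * g) := by
  rw [mulVecLin_single_val]
  funext i
  have hlt := i.isLt
  rw [hcol, AcEnt_col3 _ ((i:ℕ)+1) (by omega)]
  simp only [Pi.single_apply, Fin.ext_iff]
  split_ifs <;> first | (exfalso; omega) | ring

lemma col_val_6 (hc : 2 ≤ c) (col : Fin (2*c+2)) (hcol : (col:ℕ) + 1 = 6)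
    (g : MvPolynomial (Fin 3) K) :
    (LinearMap.restrictScalars K (AcPoly K c).mulVecLin) (Pi.single col g) =
      Pi.single (⟨1, by omega⟩ : Fin c) (X 2 * g) := by
  rw [mulVecLin_single_val]
  funext i
  have hlt := i.isLt
  rw [hcol, AcEnt_col6 _ ((i:ℕ)+1) (by omega)]
  simp only [Pi.single_apply, Fin.ext_iff]
  split_ifs <;> first | (exfalso; omega) | ring

lemma gen_pcol {r : ℕ} (hr1 : 1 ≤ r) (hrc : r ≤ c) {g : MvPolynomial (Fin 3) K}
    (hg : g ∈ homogeneousSubmodule (Fin 3) K n) :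
    Pi.single (⟨r-1, by omega⟩ : Fin c) (X 0 * g) +
      (if h : r+1 < c then Pi.single (⟨r+1, h⟩ : Fin c) (X 2 * g) else 0) ∈ MM K c n := by
  have hb : pcol r - 1 < 2*c+2 := by
    have h1 := @pcol_bound r; omega
  exact ⟨Pi.single ⟨pcol r - 1, hb⟩ g, single_mem_pi _ g hg,
    col_val_pcol hr1 hrc _ (by have := @pcol_pos r; simp only [Fin.val_mk]; omega) g⟩

lemma gen_qcol {r : ℕ} (hr1 : 2 ≤ r) (hrc : r ≤ c) {g : MvPolynomial (Fin 3) K}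
    (hg : g ∈ homogeneousSubmodule (Fin 3) K n) :
    Pi.single (⟨r-1, by omega⟩ : Fin c) (X 1 * g) +
      (if h : r < c then Pi.single (⟨r, h⟩ : Fin c) (X 2 * g) else 0) ∈ MM K c n := by
  have hb : qcol r - 1 < 2*c+2 := by
    have h1 := @qcol_bound r; omega
  exact ⟨Pi.single ⟨qcol r - 1, hb⟩ g, single_mem_pi _ g hg,
    col_val_qcol hr1 hrc _ (by have := @pcol_pos r; simp only [Fin.val_mk]; unfold qcol; omega) g⟩

lemma gen_2 (hc : 1 ≤ c) {g : MvPolynomial (Fin 3) K}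
    (hg : g ∈ homogeneousSubmodule (Fin 3) K n) :
    Pi.single (⟨0, by omega⟩ : Fin c) (X 1 * g) ∈ MM K c n :=
  ⟨Pi.single ⟨1, by omega⟩ g, single_mem_pi _ g hg, col_val_2 hc _ (by simp) g⟩

lemma gen_3 (hc : 1 ≤ c) {g : MvPolynomial (Fin 3) K}
    (hg : g ∈ homogeneousSubmodule (Fin 3) K n) :
    Pi.single (⟨0, by omega⟩ : Fin c) (X 2 * g) ∈ MM K c n :=
  ⟨Pi.single ⟨2, by omega⟩ g, single_mem_pi _ g hg, col_val_3 hc _ (by simp) g⟩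

lemma gen_6 (hc : 2 ≤ c) {g : MvPolynomial (Fin 3) K}
    (hg : g ∈ homogeneousSubmodule (Fin 3) K n) :
    Pi.single (⟨1, by omega⟩ : Fin c) (X 2 * g) ∈ MM K c n :=
  ⟨Pi.single ⟨5, by omega⟩ g, single_mem_pi _ g hg, col_val_6 hc _ (by simp) g⟩

end framework

section phi
variable {K : Type*} [Field K]

lemma psi_zero_poly (n k : ℕ) : psi n k (0 : MvPolynomial (Fin 3) K) = 0 := by
  refine Finset.sum_eq_zero fun e _ => ?_
  split_ifs <;> simp

/-- The cokernel functionals. -/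
noncomputable def Phi (K : Type*) [Field K] (c n J : ℕ) :
    (Fin c → MvPolynomial (Fin 3) K) →ₗ[K] (Fin J → K) where
  toFun w j := ∑ i : Fin c, if (j:ℕ) ≤ (i:ℕ) then psi n ((i:ℕ) - (j:ℕ)) (w i) else 0
  map_add' w₁ w₂ := by
    funext j
    rw [Pi.add_apply, ← Finset.sum_add_distrib]
    refine Finset.sum_congr rfl fun i _ => ?_
    split_ifs
    · rw [Pi.add_apply, psi_add]
    · rw [add_zero]
  map_smul' r w := by
    funext j
    simp only [RingHom.id_apply, Pi.smul_apply, smul_eq_mul]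
    rw [Finset.mul_sum]
    refine Finset.sum_congr rfl fun i _ => ?_
    split_ifs
    · exact psi_smul _ _ _ _
    · rw [mul_zero]

lemma Phi_single {c n J : ℕ} (row : Fin c) (g : MvPolynomial (Fin 3) K) (j : Fin J) :
    Phi K c n J (Pi.single row g) j =
      if (j:ℕ) ≤ (row:ℕ) then psi n ((row:ℕ) - (j:ℕ)) g else 0 := by
  show (∑ i : Fin c, _) = _
  rw [Finset.sum_eq_single row]
  · rw [Pi.single_eq_same]
  · intro i _ hne
    rw [Pi.single_eq_of_ne hne, psi_zero_poly]
    split_ifs <;> rfl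
  · intro h; exact absurd (Finset.mem_univ row) h

lemma Phi_P {c n J : ℕ} (hJc : J + (2*n+2) ≤ c) {r : ℕ} (hr1 : 1 ≤ r) (hrc : r ≤ c)
    (hb : r - 1 < c) (g : MvPolynomial (Fin 3) K) (j : Fin J) :
    Phi K c n J (Pi.single (⟨r-1, hb⟩ : Fin c) (X 0 * g) +
      (if h : r+1 < c then Pi.single (⟨r+1, h⟩ : Fin c) (X 2 * g) else 0)) j = 0 := by
  have hjJ : (j:ℕ) < J := j.isLt
  by_cases h : r + 1 < c
  · rw [dif_pos h, map_add, Pi.add_apply, Phi_single, Phi_single]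
    simp only [Fin.val_mk]
    rcases (by omega : (j:ℕ) ≤ r-1 ∨ (j:ℕ) = r ∨ (j:ℕ) = r+1 ∨ r+1 < (j:ℕ))
      with hj|hj|hj|hj
    · rw [if_pos hj, if_pos (by omega), show r+1-(j:ℕ) = (r-1-(j:ℕ))+2 by omega, add_comm]
      exact psi_I1 n (r-1-(j:ℕ)) g
    · rw [if_neg (by omega), if_pos (by omega), show r+1-(j:ℕ) = 1 by omega,
        psi_I2b, add_zero]
    · rw [if_neg (by omega), if_pos (by omega), show r+1-(j:ℕ) = 0 by omega,
        psi_I2a, add_zero]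
    · rw [if_neg (by omega), if_neg (by omega), add_zero]
  · rw [dif_neg h, add_zero, Phi_single]
    simp only [Fin.val_mk]
    split_ifs with hle
    · exact psi_I5 n _ (by omega) g
    · rfl

lemma Phi_Q {c n J : ℕ} (hJc : J + (2*n+2) ≤ c) {r : ℕ} (hr1 : 2 ≤ r) (hrc : r ≤ c)
    (hb : r - 1 < c) (g : MvPolynomial (Fin 3) K) (j : Fin J) :
    Phi K c n J (Pi.single (⟨r-1, hb⟩ : Fin c) (X 1 * g) +
      (if h : r < c then Pi.single (⟨r, h⟩ : Fin c) (X 2 * g) else 0)) j = 0 := by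
  have hjJ : (j:ℕ) < J := j.isLt
  by_cases h : r < c
  · rw [dif_pos h, map_add, Pi.add_apply, Phi_single, Phi_single]
    simp only [Fin.val_mk]
    rcases (by omega : (j:ℕ) ≤ r-1 ∨ (j:ℕ) = r ∨ r < (j:ℕ)) with hj|hj|hj
    · rw [if_pos hj, if_pos (by omega), show r-(j:ℕ) = (r-1-(j:ℕ))+1 by omega, add_comm]
      exact psi_I3 n (r-1-(j:ℕ)) g
    · rw [if_neg (by omega), if_pos (by omega), show r-(j:ℕ) = 0 by omega,
        psi_I2a, add_zero]
    · rw [if_neg (by omega), if_neg (by omega), add_zero]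
  · rw [dif_neg h, add_zero, Phi_single]
    simp only [Fin.val_mk]
    split_ifs with hle
    · exact psi_I6 n _ (by omega) g
    · rfl

lemma Phi_C2 {c n J : ℕ} (hb : (0:ℕ) < c) (g : MvPolynomial (Fin 3) K) (j : Fin J) :
    Phi K c n J (Pi.single (⟨0, hb⟩ : Fin c) (X 1 * g)) j = 0 := by
  rw [Phi_single]
  simp only [Fin.val_mk]
  split_ifs with hle
  · rw [show (0:ℕ) - (j:ℕ) = 0 by omega, psi_I4]
  · rfl

lemma Phi_C3 {c n J : ℕ} (hb : (0:ℕ) < c) (g : MvPolynomial (Fin 3) K) (j : Fin J) :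
    Phi K c n J (Pi.single (⟨0, hb⟩ : Fin c) (X 2 * g)) j = 0 := by
  rw [Phi_single]
  simp only [Fin.val_mk]
  split_ifs with hle
  · rw [show (0:ℕ) - (j:ℕ) = 0 by omega, psi_I2a]
  · rfl

lemma Phi_C6 {c n J : ℕ} (hb : (1:ℕ) < c) (g : MvPolynomial (Fin 3) K) (j : Fin J) :
    Phi K c n J (Pi.single (⟨1, hb⟩ : Fin c) (X 2 * g)) j = 0 := by
  rw [Phi_single]
  simp only [Fin.val_mk]
  rcases (by omega : (j:ℕ) = 0 ∨ (j:ℕ) = 1 ∨ 1 < (j:ℕ)) with hj|hj|hj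
  · rw [if_pos (by omega), show (1:ℕ) - (j:ℕ) = 1 by omega, psi_I2b]
  · rw [if_pos (by omega), show (1:ℕ) - (j:ℕ) = 0 by omega, psi_I2a]
  · rw [if_neg (by omega)]

/-- Φ kills the image of `μ`. -/
lemma Phi_vanish {c n J : ℕ} (hc : 3 ≤ c) (hJc : J + (2*n+2) ≤ c)
    (v : Fin (2*c+2) → MvPolynomial (Fin 3) K) :
    Phi K c n J ((LinearMap.restrictScalars K (AcPoly K c).mulVecLin) v) = 0 := by
  have hv : v = ∑ col : Fin (2*c+2), Pi.single col (v col) := (Finset.univ_sum_single v).symm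
  rw [hv, map_sum, map_sum]
  rw [show (0 : Fin J → K) = ∑ _col : Fin (2*c+2), 0 by simp]
  refine Finset.sum_congr rfl fun col _ => ?_
  funext j
  have hcol2 := col.isLt
  show Phi K c n J ((LinearMap.restrictScalars K (AcPoly K c).mulVecLin)
      (Pi.single col (v col))) j = (0 : Fin J → K) j
  rw [show (0 : Fin J → K) j = 0 from rfl]
  rcases (by omega :
      ((col:ℕ)+1 = 1 ∨ (col:ℕ)+1 = 2 ∨ (col:ℕ)+1 = 3 ∨ (col:ℕ)+1 = 4 ∨ (col:ℕ)+1 = 5 ∨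
        (col:ℕ)+1 = 6 ∨ (7 ≤ (col:ℕ)+1 ∧ (col:ℕ) % 2 = 0) ∨
        (7 ≤ (col:ℕ)+1 ∧ (col:ℕ) % 2 = 1))) with h1|h1|h1|h1|h1|h1|h1|h1
  · rw [col_val_pcol (r := 1) le_rfl (by omega) col (by rw [h1]; rfl) (v col)]
    exact Phi_P hJc le_rfl (by omega) _ (v col) j
  · rw [col_val_2 (by omega) col h1 (v col)]
    exact Phi_C2 (by omega) (v col) j
  · rw [col_val_3 (by omega) col h1 (v col)]
    exact Phi_C3 (by omega) (v col) j
  · rw [col_val_pcol (r := 2) (by omega) (by omega) col (by rw [h1]; rfl) (v col)]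
    exact Phi_P hJc (by omega) (by omega) _ (v col) j
  · rw [col_val_qcol (r := 2) le_rfl (by omega) col (by rw [h1]; rfl) (v col)]
    exact Phi_Q hJc le_rfl (by omega) _ (v col) j
  · rw [col_val_6 (by omega) col h1 (v col)]
    exact Phi_C6 (by omega) (v col) j
  · -- odd column ≥ 7 : p_r with r = col/2 (1-based col index = 2r+1)
    obtain ⟨hge, hpar⟩ := h1
    set r := (col:ℕ) / 2 with hrdef
    have hr3 : 3 ≤ r := by omega
    have hrc : r ≤ c := by omega
    have hcolval : (col:ℕ) + 1 = pcol r := by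
      unfold pcol; split_ifs <;> omega
    rw [col_val_pcol (r := r) (by omega) hrc col hcolval (v col)]
    exact Phi_P hJc (by omega) hrc _ (v col) j
  · -- even column ≥ 8 : q_r with 1-based col index = 2r+2
    obtain ⟨hge, hpar⟩ := h1
    set r := ((col:ℕ) - 1) / 2 with hrdef
    have hr3 : 3 ≤ r := by omega
    have hrc : r ≤ c := by omega
    have hcolval : (col:ℕ) + 1 = qcol r := by
      unfold qcol pcol; split_ifs <;> omega
    rw [col_val_qcol (r := r) (by omega) hrc col hcolval (v col)]
    exact Phi_Q hJc (by omega) hrc _ (v col) j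

/-- Φ on the basis tuples `t^{n+1} e_row`. -/
lemma Phi_tmon {c n J : ℕ} (hJc : J + (2*n+2) ≤ c) (j' j : Fin J) (hb : (j':ℕ) + 2*n+2 < c) :
    Phi K c n J (Pi.single (⟨(j':ℕ) + 2*n+2, hb⟩ : Fin c) (tmon K n)) j =
      if j = j' then (-1:K)^(n+1) else 0 := by
  rw [Phi_single]
  simp only [Fin.val_mk]
  by_cases hle : (j:ℕ) ≤ (j':ℕ) + 2*n+2
  · rw [if_pos hle, tmon, psi_tmon]
    by_cases hjj : (j:ℕ) = (j':ℕ)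
    · rw [if_pos (by omega), if_pos (Fin.ext hjj)]
    · rw [if_neg (by omega), if_neg (fun h => hjj (by rw [h]))]
  · rw [if_neg hle, if_neg (fun h => hle (by rw [h]; omega))]
end phi

section span
variable {K : Type*} [Field K]

lemma single_idx_congr {c : ℕ} {M : Type*} [Zero M] {i i' : Fin c} (h : i = i') (v : M) :
    (Pi.single i v : Fin c → M) = Pi.single i' v := by rw [h]

lemma mdeg_eta (m : Fin 3 →₀ ℕ) : mdeg (m 0) (m 1) (m 2) = m := by
  ext x; fin_cases x <;> simp [mdeg, Finsupp.single_apply]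

/-- Basis tuples of the cokernel. -/
noncomputable def Bfun (K : Type*) [Field K] (c n : ℕ) :
    Fin (c - (2*n+2)) → (Fin c → MvPolynomial (Fin 3) K) :=
  fun j => Pi.single ⟨(j:ℕ) + 2*n+2, by have := j.isLt; omega⟩ (tmon K n)

/-- The candidate for the whole degree-(n+1) space. -/
noncomputable def NN (K : Type*) [Field K] (c n : ℕ) :
    Submodule K (Fin c → MvPolynomial (Fin 3) K) :=
  MM K c n ⊔ Submodule.span K (Set.range (Bfun K c n))

variable {c n : ℕ}

lemma gen_x (r0 : ℕ) (h0 : r0 < c) {g : MvPolynomial (Fin 3) K}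
    (hg : g ∈ homogeneousSubmodule (Fin 3) K n) :
    Pi.single (⟨r0, h0⟩ : Fin c) (X 0 * g) +
      (if h : r0+2 < c then Pi.single (⟨r0+2, h⟩ : Fin c) (X 2 * g) else 0) ∈ MM K c n := by
  exact gen_pcol (c := c) (r := r0+1) (by omega) (by omega) hg

lemma gen_yq (r0 : ℕ) (h0 : r0 < c) (h1 : 1 ≤ r0) {g : MvPolynomial (Fin 3) K}
    (hg : g ∈ homogeneousSubmodule (Fin 3) K n) :
    Pi.single (⟨r0, h0⟩ : Fin c) (X 1 * g) +
      (if h : r0+1 < c then Pi.single (⟨r0+1, h⟩ : Fin c) (X 2 * g) else 0) ∈ MM K c n := by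
  exact gen_qcol (c := c) (r := r0+1) (by omega) (by omega) hg

lemma tpure (hc : 3 ≤ c) :
    ∀ r, ∀ (hr : r < c) (a e' : ℕ), r < 2*e' → a + e' = n + 1 →
      Pi.single (⟨r, hr⟩ : Fin c) (monomial (mdeg a 0 e') (1:K)) ∈ MM K c n := by
  intro r
  induction r using Nat.strong_induction_on with
  | _ r IH =>
    intro hr a e' hre hae
    have he1 : 1 ≤ e' := by omega
    have hf : (monomial (mdeg a 0 (e'-1)) (1:K)) ∈ homogeneousSubmodule (Fin 3) K n :=
      mdeg_mem_homog _ (by omega)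
    have hx2 : X 2 * monomial (mdeg a 0 (e'-1)) (1:K) = monomial (mdeg a 0 e') 1 := by
      rw [X2_mul_mdeg, show e'-1+1 = e' by omega]
    rcases (by omega : r = 0 ∨ r = 1 ∨ 2 ≤ r) with rfl | rfl | hr2
    · have h := gen_3 (c := c) (by omega) hf
      rw [hx2] at h
      exact h
    · have h := gen_6 (c := c) (by omega) hf
      rw [hx2] at h
      exact h
    · have he2 : 2 ≤ e' := by omega
      have hgen := gen_x (c := c) (r0 := r-2) (by omega) hf
      have hlt : r-2+2 < c := by omega
      rw [dif_pos hlt,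
        single_idx_congr (show (⟨r-2+2, hlt⟩ : Fin c) = ⟨r, hr⟩ from Fin.ext (by simp; omega)) _,
        hx2, X0_mul_mdeg a 0 (e'-1) 1] at hgen
      have hIH := IH (r-2) (by omega) (by omega) (a+1) (e'-1) (by omega) (by omega)
      have hsub := Submodule.sub_mem _ hgen hIH
      simpa using hsub

lemma span_step (hc : 3 ≤ c) :
    ∀ s a b e r (hr : r < c), a + b = s → a + b + e = n + 1 →
      Pi.single (⟨r, hr⟩ : Fin c) (monomial (mdeg a b e) (1:K)) ∈ NN K c n := by
  intro s
  induction s using Nat.strong_induction_on with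
  | _ s IH =>
  intro a b e r hr hab hdeg
  by_cases ha : 0 < a
  · have hf : (monomial (mdeg (a-1) b e) (1:K)) ∈ homogeneousSubmodule (Fin 3) K n :=
      mdeg_mem_homog _ (by omega)
    have hgen := gen_x (c := c) (r0 := r) hr hf
    rw [show X 0 * monomial (mdeg (a-1) b e) (1:K) = monomial (mdeg a b e) 1 by
      rw [X0_mul_mdeg, show a-1+1 = a by omega]] at hgen
    by_cases h2 : r + 2 < c
    · rw [dif_pos h2,
        show X 2 * monomial (mdeg (a-1) b e) (1:K) = monomial (mdeg (a-1) b (e+1)) 1 from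
          X2_mul_mdeg _ _ _ _] at hgen
      have hIH := IH (s-1) (by omega) (a-1) b (e+1) (r+2) h2 (by omega) (by omega)
      have hsub := Submodule.sub_mem _ (Submodule.mem_sup_left hgen) hIH
      simpa [NN] using hsub
    · rw [dif_neg h2, add_zero] at hgen
      exact Submodule.mem_sup_left hgen
  · obtain rfl : a = 0 := by omega
    by_cases hb : 0 < b
    · have hf : (monomial (mdeg 0 (b-1) e) (1:K)) ∈ homogeneousSubmodule (Fin 3) K n :=
        mdeg_mem_homog _ (by omega)
      have hx1 : X 1 * monomial (mdeg 0 (b-1) e) (1:K) = monomial (mdeg 0 b e) 1 := by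
        rw [X1_mul_mdeg, show b-1+1 = b by omega]
      rcases (by omega : r = 0 ∨ 1 ≤ r) with rfl | hr1
      · have h := gen_2 (c := c) (by omega) hf
        rw [hx1] at h
        exact Submodule.mem_sup_left h
      · have hgen := gen_yq (c := c) (r0 := r) hr hr1 hf
        rw [hx1] at hgen
        by_cases h2 : r + 1 < c
        · rw [dif_pos h2,
            show X 2 * monomial (mdeg 0 (b-1) e) (1:K) = monomial (mdeg 0 (b-1) (e+1)) 1 from
              X2_mul_mdeg _ _ _ _] at hgen
          have hIH := IH (s-1) (by omega) 0 (b-1) (e+1) (r+1) h2 (by omega) (by omega)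
          have hsub := Submodule.sub_mem _ (Submodule.mem_sup_left hgen) hIH
          simpa [NN] using hsub
        · rw [dif_neg h2, add_zero] at hgen
          exact Submodule.mem_sup_left hgen
    · obtain rfl : b = 0 := by omega
      obtain rfl : e = n + 1 := by omega
      by_cases hrb : r < 2*n+2
      · exact Submodule.mem_sup_left (tpure hc r hr 0 (n+1) (by omega) (by omega))
      · refine Submodule.mem_sup_right (Submodule.subset_span ⟨⟨r - (2*n+2), by omega⟩, ?_⟩)
        exact single_idx_congr (Fin.ext (by simp; omega)) (tmon K n)

lemma V_le_NN (hc : 3 ≤ c) :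
    Submodule.pi Set.univ (fun _ : Fin c => homogeneousSubmodule (Fin 3) K (n+1)) ≤
      NN K c n := by
  intro w hw
  have hw2 : (∑ i, Pi.single i (w i)) = w := Finset.univ_sum_single w
  rw [← hw2]
  refine Submodule.sum_mem _ fun i _ => ?_
  have hwi : (w i).IsHomogeneous (n+1) := (Submodule.mem_pi.mp hw) i (Set.mem_univ i)
  have hrw : (Pi.single i (w i) : Fin c → MvPolynomial (Fin 3) K) =
      ∑ v ∈ (w i).support, Pi.single i (monomial v (coeff v (w i))) := by
    conv_lhs => rw [show (Pi.single i (w i) : Fin c → MvPolynomial (Fin 3) K) =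
      (LinearMap.single K (fun _ : Fin c => MvPolynomial (Fin 3) K) i) (w i) from rfl,
      as_sum (w i)]
    rw [map_sum]
    rfl
  rw [hrw]
  refine Submodule.sum_mem _ fun v hv => ?_
  have hdeg : v 0 + v 1 + v 2 = n + 1 := by
    have h1 := hwi (Finsupp.mem_support_iff.mp hv)
    change Finsupp.weight (fun _ => 1) v = _ at h1
    rw [← Finsupp.degree_eq_weight_one, degree_eq_sum_univ, Fin.sum_univ_three] at h1
    exact h1
  have hmono : monomial v (coeff v (w i)) = coeff v (w i) • monomial v (1:K) := by
    rw [smul_monomial, smul_eq_mul, mul_one]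
  rw [hmono, Pi.single_smul]
  refine Submodule.smul_mem _ _ ?_
  have := span_step (K := K) hc (v 0 + v 1) (v 0) (v 1) (v 2) (i:ℕ) i.isLt rfl hdeg
  rw [mdeg_eta] at this
  simpa using this

lemma fd_homog (m : ℕ) : FiniteDimensional K (homogeneousSubmodule (Fin 3) K m) :=
  Submodule.finiteDimensional_of_le (S₂ := restrictTotalDegree (Fin 3) K m)
    (fun p hp => (mem_restrictTotalDegree _ _ _).2 hp.totalDegree_le)

lemma fd_pi (x m : ℕ) :
    FiniteDimensional K
      (Submodule.pi Set.univ fun _ : Fin x => homogeneousSubmodule (Fin 3) K m) := by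
  rw [← Submodule.iSup_map_single]
  haveI := fd_homog (K := K) m
  infer_instance

end span

section final
variable {K : Type*} [Field K]

lemma homogPi_natCast (x m : ℕ) :
    homogPi K x (m : ℤ) =
      Submodule.pi Set.univ (fun _ : Fin x => homogeneousSubmodule (Fin 3) K m) := by
  rw [homogPi, if_pos (by positivity), Int.toNat_natCast]

lemma homogPi_neg_one (x : ℕ) : homogPi K x (-1) = ⊥ := by
  rw [homogPi, if_neg (by norm_num)]

lemma ent_homog (i j : ℕ) :
    (AcEnt (fun k => (X k : MvPolynomial (Fin 3) K)) i j).IsHomogeneous 1 := by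
  have hone : ∀ (P : Prop) [Decidable P] (k : Fin 3),
      ((if P then (X k : MvPolynomial (Fin 3) K) else 0)).IsHomogeneous 1 := by
    intro P _ k
    split_ifs
    · exact isHomogeneous_X _ _
    · exact isHomogeneous_zero _ _ _
  by_cases h : i ≤ 2
  · rw [AcEnt, if_pos h]
    exact ((hone _ _).add (hone _ _)).add (hone _ _)
  · rw [AcEnt, if_neg h]
    exact (((hone _ _).add (hone _ _)).add (hone _ _)).add (hone _ _)

lemma MM_le_V {c n : ℕ} :
    MM K c n ≤
      Submodule.pi Set.univ (fun _ : Fin c => homogeneousSubmodule (Fin 3) K (n+1)) := by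
  rintro _ ⟨v, hv, rfl⟩
  rw [Submodule.mem_pi]
  intro i _
  show (AcPoly K c).mulVec v i ∈ _
  rw [show (AcPoly K c).mulVec v i = ∑ j, AcPoly K c i j * v j from rfl]
  refine Submodule.sum_mem _ fun j _ => ?_
  have hA : (AcPoly K c i j).IsHomogeneous 1 := ent_homog _ _
  have hv' : (v j).IsHomogeneous n := (Submodule.mem_pi.mp hv) j (Set.mem_univ j)
  rw [mem_homogeneousSubmodule, show n + 1 = 1 + n by omega]
  exact hA.mul hv'

lemma finrank_V_le {c n : ℕ} (hc : 3 ≤ c) :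
    Module.finrank K
        (Submodule.pi Set.univ (fun _ : Fin c => homogeneousSubmodule (Fin 3) K (n+1))) ≤
      Module.finrank K (MM K c n) + (c - (2*n+2)) := by
  haveI hfdV := fd_pi (K := K) c (n+1)
  haveI hfdM : FiniteDimensional K (MM K c n) :=
    Submodule.finiteDimensional_of_le (MM_le_V (n := n))
  haveI hfdS : FiniteDimensional K (Submodule.span K (Set.range (Bfun K c n))) :=
    FiniteDimensional.span_of_finite K (Set.finite_range _)
  haveI hfdN : FiniteDimensional K (NN K c n) := by
    rw [NN]; infer_instance
  have h1 : Module.finrank K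
      (Submodule.pi Set.univ (fun _ : Fin c => homogeneousSubmodule (Fin 3) K (n+1))) ≤
      Module.finrank K (NN K c n) := Submodule.finrank_mono (V_le_NN hc)
  have h2 : Module.finrank K (NN K c n) ≤
      Module.finrank K (MM K c n) +
        Module.finrank K (Submodule.span K (Set.range (Bfun K c n))) := by
    have := Submodule.finrank_sup_add_finrank_inf_eq (MM K c n)
      (Submodule.span K (Set.range (Bfun K c n)))
    rw [NN]; omega
  have h3 : Module.finrank K (Submodule.span K (Set.range (Bfun K c n))) ≤ c - (2*n+2) := by
    have := finrank_range_le_card (R := K) (Bfun K c n)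
    rwa [Set.finrank, Fintype.card_fin] at this
  omega

lemma finrank_V_ge {c n : ℕ} (hc : 3 ≤ c) (hJ : 0 < c - (2*n+2)) :
    Module.finrank K (MM K c n) + (c - (2*n+2)) ≤
      Module.finrank K
        (Submodule.pi Set.univ (fun _ : Fin c => homogeneousSubmodule (Fin 3) K (n+1))) := by
  haveI hfdV := fd_pi (K := K) c (n+1)
  set J := c - (2*n+2) with hJdef
  have hJc : J + (2*n+2) ≤ c := by omega
  set V := Submodule.pi Set.univ (fun _ : Fin c => homogeneousSubmodule (Fin 3) K (n+1))
    with hVdef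
  set ΦV := (Phi K c n J).comp V.subtype with hPhiV
  have hsurj : Function.Surjective ΦV := by
    intro u
    set wfun : Fin J → (Fin c → MvPolynomial (Fin 3) K) := fun j' =>
      ((-1:K)^(n+1) * u j') •
        (Pi.single (⟨(j':ℕ) + 2*n+2, by have := j'.isLt; omega⟩ : Fin c) (tmon K n) :
          Fin c → MvPolynomial (Fin 3) K) with hwfun
    have hmem : (∑ j' : Fin J, wfun j') ∈ V := by
      refine Submodule.sum_mem _ fun j' _ => Submodule.smul_mem _ _ ?_
      exact single_mem_pi _ _ (tmon_mem_homog n)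
    refine ⟨⟨_, hmem⟩, ?_⟩
    funext j
    show Phi K c n J (∑ j' : Fin J, wfun j') j = u j
    rw [map_sum]
    rw [show (∑ j' : Fin J, Phi K c n J (wfun j')) j
        = ∑ j' : Fin J, (Phi K c n J (wfun j')) j from Finset.sum_apply _ _ _]
    simp only [hwfun]
    rw [Finset.sum_eq_single j]
    · rw [LinearMap.map_smul, Pi.smul_apply, Phi_tmon hJc j j (by have := j.isLt; omega), if_pos rfl,
        smul_eq_mul]
      have hpow : (-1:K)^(n+1) * (-1:K)^(n+1) = 1 := by
        rw [← pow_add]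
        exact Even.neg_one_pow ⟨n+1, by ring⟩
      calc (-1:K)^(n+1) * u j * (-1:K)^(n+1)
          = ((-1:K)^(n+1) * (-1:K)^(n+1)) * u j := by ring
        _ = u j := by rw [hpow, one_mul]
    · intro j' _ hne
      rw [LinearMap.map_smul, Pi.smul_apply, Phi_tmon hJc j' j (by have := j'.isLt; omega),
        if_neg (Ne.symm hne), smul_zero]
    · intro h
      exact absurd (Finset.mem_univ j) h
  have hrank := LinearMap.finrank_range_add_finrank_ker ΦV
  have hrange : Module.finrank K (LinearMap.range ΦV) = J := by
    rw [LinearMap.range_eq_top.2 hsurj, finrank_top, Module.finrank_fintype_fun_eq_card,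
      Fintype.card_fin]
  -- the kernel of ΦV has the same finrank as V ⊓ ker Φ
  have hkercomap : LinearMap.ker ΦV = Submodule.comap V.subtype
      (V ⊓ LinearMap.ker (Phi K c n J)) := by
    rw [hPhiV, LinearMap.ker_comp]
    ext x
    simp [Submodule.mem_comap, x.2]
  have hkerrank : Module.finrank K (LinearMap.ker ΦV) =
      Module.finrank K (V ⊓ LinearMap.ker (Phi K c n J) : Submodule K _) := by
    rw [hkercomap]
    exact (Submodule.comapSubtypeEquivOfLe inf_le_left).finrank_eq
  have hMle : MM K c n ≤ V ⊓ LinearMap.ker (Phi K c n J) := by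
    refine le_inf MM_le_V ?_
    rintro _ ⟨v, hv, rfl⟩
    exact Phi_vanish hc hJc v
  haveI : FiniteDimensional K (V ⊓ LinearMap.ker (Phi K c n J) : Submodule K _) :=
    Submodule.finiteDimensional_of_le inf_le_left
  have hMrank : Module.finrank K (MM K c n) ≤
      Module.finrank K (V ⊓ LinearMap.ker (Phi K c n J) : Submodule K _) :=
    Submodule.finrank_mono hMle
  omega

lemma coker_eq_nat {c : ℕ} (hc : 3 ≤ c) (n : ℕ) :
    Module.finrank K
        (Submodule.pi Set.univ (fun _ : Fin c => homogeneousSubmodule (Fin 3) K (n+1))) =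
      Module.finrank K (MM K c n) + (c - (2*n+2)) := by
  by_cases hJ : 0 < c - (2*n+2)
  · exact le_antisymm (finrank_V_le hc) (finrank_V_ge hc hJ)
  · haveI hfdV := fd_pi (K := K) c (n+1)
    have h1 := finrank_V_le (K := K) (c := c) (n := n) hc
    have h2 : Module.finrank K (MM K c n) ≤ Module.finrank K
        (Submodule.pi Set.univ (fun _ : Fin c => homogeneousSubmodule (Fin 3) K (n+1))) :=
      Submodule.finrank_mono MM_le_V
    omega

end final

section degzero
variable {K : Type*} [Field K]

lemma mdeg_zero : mdeg 0 0 0 = (0 : Fin 3 →₀ ℕ) := by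
  ext x; fin_cases x <;> simp [mdeg]

lemma finrank_V0 {c : ℕ} (hc : 3 ≤ c) :
    Module.finrank K
      (Submodule.pi Set.univ (fun _ : Fin c => homogeneousSubmodule (Fin 3) K 0)) = c := by
  haveI hfdV := fd_pi (K := K) c 0
  set V0 := Submodule.pi Set.univ (fun _ : Fin c => homogeneousSubmodule (Fin 3) K 0)
    with hV0
  -- upper bound
  set bfun : Fin c → (Fin c → MvPolynomial (Fin 3) K) := fun i =>
    (Pi.single i (monomial (0 : Fin 3 →₀ ℕ) (1:K)) : Fin c → MvPolynomial (Fin 3) K)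
    with hbfun
  have hle : V0 ≤ Submodule.span K (Set.range bfun) := by
    intro w hw
    have hw2 : (∑ i, Pi.single i (w i)) = w := Finset.univ_sum_single w
    rw [← hw2]
    refine Submodule.sum_mem _ fun i _ => ?_
    have hwi : (w i).IsHomogeneous 0 := (Submodule.mem_pi.mp hw) i (Set.mem_univ i)
    have hrw : (Pi.single i (w i) : Fin c → MvPolynomial (Fin 3) K) =
        ∑ v ∈ (w i).support, Pi.single i (monomial v (coeff v (w i))) := by
      conv_lhs => rw [show (Pi.single i (w i) : Fin c → MvPolynomial (Fin 3) K) =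
        (LinearMap.single K (fun _ : Fin c => MvPolynomial (Fin 3) K) i) (w i) from rfl,
        as_sum (w i)]
      rw [map_sum]
      rfl
    rw [hrw]
    refine Submodule.sum_mem _ fun v hv => ?_
    have hdeg : v 0 + v 1 + v 2 = 0 := by
      have h1 := hwi (Finsupp.mem_support_iff.mp hv)
      change Finsupp.weight (fun _ => 1) v = _ at h1
      rw [← Finsupp.degree_eq_weight_one, degree_eq_sum_univ, Fin.sum_univ_three] at h1
      exact h1
    have hv0 : v = 0 := by
      rw [← mdeg_eta v, show v 0 = 0 by omega, show v 1 = 0 by omega,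
        show v 2 = 0 by omega, mdeg_zero]
    have hmono : monomial v (coeff v (w i)) = coeff v (w i) • monomial v (1:K) := by
      rw [smul_monomial, smul_eq_mul, mul_one]
    rw [hmono, Pi.single_smul]
    refine Submodule.smul_mem _ _ (Submodule.subset_span ⟨i, ?_⟩)
    rw [hbfun, hv0]
  have hub : Module.finrank K V0 ≤ c := by
    haveI : FiniteDimensional K (Submodule.span K (Set.range bfun)) :=
      FiniteDimensional.span_of_finite K (Set.finite_range _)
    have h1 : Module.finrank K V0 ≤
        Module.finrank K (Submodule.span K (Set.range bfun)) := Submodule.finrank_mono hle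
    have h2 := finrank_range_le_card (R := K) bfun
    rw [Set.finrank, Fintype.card_fin] at h2
    omega
  -- lower bound via evaluation of constant coefficients
  set Φ0 : (Fin c → MvPolynomial (Fin 3) K) →ₗ[K] (Fin c → K) :=
    LinearMap.pi (fun i : Fin c => (lcoeff K (0 : Fin 3 →₀ ℕ)).comp (LinearMap.proj i))
    with hPhi0
  set Φ0V := Φ0.comp V0.subtype with hPhi0V
  have hsurj : Function.Surjective Φ0V := by
    intro u
    have hmem : (fun i => C (u i) : Fin c → MvPolynomial (Fin 3) K) ∈ V0 := by
      rw [hV0, Submodule.mem_pi]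
      intro i _
      exact isHomogeneous_C _ _
    refine ⟨⟨_, hmem⟩, ?_⟩
    funext i
    show coeff 0 (C (u i)) = u i
    exact coeff_zero_C _
  have hrank := LinearMap.finrank_range_add_finrank_ker Φ0V
  have hrange : Module.finrank K (LinearMap.range Φ0V) = c := by
    rw [LinearMap.range_eq_top.2 hsurj, finrank_top, Module.finrank_fintype_fun_eq_card,
      Fintype.card_fin]
  omega

end degzero

theorem stmt12' {K : Type*} [Field K] [IsAlgClosed K] [CharZero K]
    (c : ℕ) (hc : 3 ≤ c) :
    ∀ t : ℤ, -1 ≤ t → (cokerDimAc K c t : ℤ) = max 0 ((c : ℤ) - 2 * (t + 1)) := by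
  intro t ht
  rcases (by omega : t = -1 ∨ 0 ≤ t) with rfl | ht0
  · rw [cokerDimAc, homogPi_neg_one, Submodule.map_bot,
      show (-1 : ℤ) + 1 = ((0:ℕ):ℤ) by norm_num, homogPi_natCast, finrank_V0 hc, finrank_bot]
    simp
  · lift t to ℕ using ht0 with n
    rw [cokerDimAc, show (n:ℤ) + 1 = ((n+1 : ℕ):ℤ) by push_cast; ring,
      homogPi_natCast, homogPi_natCast,
      show (Submodule.map (LinearMap.restrictScalars K (AcPoly K c).mulVecLin)
        (Submodule.pi Set.univ fun _ : Fin (2*c+2) => homogeneousSubmodule (Fin 3) K n))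
        = MM K c n from rfl,
      coker_eq_nat hc n, Nat.add_sub_cancel_left]
    omega

end aux12

/-- **Lemma 19 and Proposition 20 (cohomology values).** For the minimal-rank 1-type
uniform Steiner bundle `E_c` of Example 9 one has `h¹(E_c(t)) = max(0, c − 2(t+1))` for
every `t ≥ −1`; in particular `h¹(E_c(t+1)) = max(0, h¹(E_c(t)) − 2)`, and `h¹(E_c(t))`
vanishes exactly for `t > (c−3)/2` (`c` odd, with value 1 at `(c−3)/2`), resp.
`t > (c−4)/2` (`c` even, with value 2 at `(c−4)/2`). -/
theorem stmt12 {K : Type*} [Field K] [IsAlgClosed K] [CharZero K]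
    (c : ℕ) (hc : 3 ≤ c) :
    ∀ t : ℤ, -1 ≤ t → (cokerDimAc K c t : ℤ) = max 0 ((c : ℤ) - 2 * (t + 1)) :=
  stmt12' c hc
end
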